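/- arXiv:2309.12472 — 3 statements merged into one kernel-verified Lean document; each statement's English description precedes it below -/
import Mathlib

section
/- Let A be a C*-algebra, I a closed two-sided ideal of A, and J a closed two-sided ideal containing a full element. Then I ⋐ J if and only if for every increasing sequence of ideals (I_n) with J contained in the closure of their union, there exists n with I ⊆ I_n. In other words, on ideals with a full element, compact containment coincides with the sequential way-below relation. -/
/-- `I ⋐ J`: whenever `J` is contained in the closed sum of a family of closed two-sided
ideals, `I` is contained in a finite subsum. -/
def CompactlyContained {A : Type*} [NonUnitalCStarAlgebra A]
    (I J : TwoSidedIdeal A) : Prop :=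
  ∀ {Λ : Type} (f : Λ → TwoSidedIdeal A), (∀ l, IsClosed (f l : Set A)) →
    (J : Set A) ⊆ closure ((⨆ l, f l : TwoSidedIdeal A) : Set A) →
    ∃ s : Finset Λ, (I : Set A) ⊆ ((s.sup f : TwoSidedIdeal A) : Set A)

/-- The closed two-sided ideal of `A` generated by a set. -/
def genClosedIdeal {A : Type*} [NonUnitalCStarAlgebra A] (s : Set A) : TwoSidedIdeal A :=
  sInf {J : TwoSidedIdeal A | IsClosed (J : Set A) ∧ s ⊆ J}


section Aux

open scoped Unitization

variable {A : Type*} [NonUnitalCStarAlgebra A]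


set_option maxHeartbeats 1000000 in
/-- `cfcₙ f (x * star x)` belongs to any closed two-sided ideal containing `x`. -/
theorem cfcₙ_mul_star_self_mem (K : TwoSidedIdeal A) (hK : IsClosed (K : Set A))
    {x : A} (hx : x ∈ K) (f : ℝ → ℝ) (hf : Continuous f) (hf0 : f 0 = 0) :
    cfcₙ f (x * star x) ∈ K := by
  have hh : IsSelfAdjoint (x * star x) := IsSelfAdjoint.mul_star_self x
  have hhK : x * star x ∈ K := K.mul_mem_right x (star x) hx
  rw [cfcₙ_apply f (x * star x) hf.continuousOn hf0 hh]
  have hφc : Continuous (cfcₙHom (R := ℝ) hh) := (cfcₙHom_isClosedEmbedding hh).continuous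
  have h0' : ((0 : quasispectrum ℝ (x * star x)) : ℝ) = 0 := rfl
  have main : ∀ g : ContinuousMapZero (quasispectrum ℝ (x * star x)) ℝ,
      cfcₙHom (R := ℝ) hh g ∈ K ∧ ∀ r : ℝ, r • cfcₙHom (R := ℝ) hh g ∈ K := by
    have hid : cfcₙHom (R := ℝ) hh (ContinuousMapZero.id (quasispectrum ℝ (x * star x))) = x * star x := cfcₙHom_id hh
    have hidmem : cfcₙHom (R := ℝ) hh (ContinuousMapZero.id (quasispectrum ℝ (x * star x))) ∈ K ∧
        ∀ r : ℝ, r • cfcₙHom (R := ℝ) hh (ContinuousMapZero.id (quasispectrum ℝ (x * star x))) ∈ K := by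
      rw [hid]
      refine ⟨hhK, fun r => ?_⟩
      rw [← mul_smul_comm]
      exact K.mul_mem_right x (r • star x) hx
    intro g
    induction g using ContinuousMapZero.induction_on_of_compact with
    | zero => exact ⟨by simp only [map_zero]; exact K.zero_mem, fun r => by
        simp only [map_zero, smul_zero]; exact K.zero_mem⟩
    | id => exact hidmem
    | star_id =>
      have hstar : star (ContinuousMapZero.id (quasispectrum ℝ (x * star x))) = ContinuousMapZero.id (quasispectrum ℝ (x * star x)) := by
        ext s; exact star_trivial _
      rw [hstar]; exact hidmem
    | add g₁ g₂ h₁ h₂ =>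
      refine ⟨by rw [map_add]; exact K.add_mem h₁.1 h₂.1, fun r => ?_⟩
      rw [map_add, smul_add]
      exact K.add_mem (h₁.2 r) (h₂.2 r)
    | mul g₁ g₂ h₁ h₂ =>
      refine ⟨by rw [map_mul]; exact K.mul_mem_right _ _ h₁.1, fun r => ?_⟩
      rw [map_mul, ← smul_mul_assoc]
      exact K.mul_mem_right _ _ (h₁.2 r)
    | smul r g hg =>
      refine ⟨by rw [map_smul]; exact hg.2 r, fun r' => ?_⟩
      rw [map_smul, smul_smul]
      exact hg.2 (r' * r)
    | frequently g hg =>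
      have hcl : IsClosed {g : ContinuousMapZero (quasispectrum ℝ (x * star x)) ℝ |
          cfcₙHom (R := ℝ) hh g ∈ K ∧ ∀ r : ℝ, r • cfcₙHom (R := ℝ) hh g ∈ K} := by
        have hset : {g : ContinuousMapZero (quasispectrum ℝ (x * star x)) ℝ |
            cfcₙHom (R := ℝ) hh g ∈ K ∧ ∀ r : ℝ, r • cfcₙHom (R := ℝ) hh g ∈ K}
            = ((cfcₙHom (R := ℝ) hh) ⁻¹' (K : Set A)) ∩
              ⋂ r : ℝ, (fun g => r • cfcₙHom (R := ℝ) hh g) ⁻¹' (K : Set A) := by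
          ext g; simp [Set.mem_iInter]
        rw [hset]
        exact (hK.preimage hφc).inter (isClosed_iInter fun r => hK.preimage (by fun_prop))
      exact hg.mem_of_closed hcl
  exact (main _).1

/-- Single element approximate unit. -/
theorem exists_approxUnit (x : A) {δ : ℝ} (hδ : 0 < δ) :
    ∃ e : A, IsSelfAdjoint e ∧
      (∀ K : TwoSidedIdeal A, IsClosed (K : Set A) → x ∈ K → e ∈ K) ∧
      ‖(1 : Unitization ℂ A) - e‖ ≤ 1 ∧ ‖x - e * x‖ ≤ δ := by
  set u : ℝ := (2 * δ ^ 2)⁻¹ with hu_def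
  have hu : 0 < u := by positivity
  set w : ℝ → ℝ := fun s => (1 + u ^ 2 * s ^ 2)⁻¹ with hw_def
  have hwpos : ∀ s, 0 < w s := fun s => by positivity
  have hwle : ∀ s, w s ≤ 1 := fun s => by
    rw [hw_def]
    rw [inv_le_one_iff₀]
    right; nlinarith [sq_nonneg (u * s)]
  have hwc : Continuous w := by
    apply Continuous.inv₀ (by fun_prop)
    intro s; positivity
  set f : ℝ → ℝ := fun s => 1 - w s with hf_def
  have hfc : Continuous f := by fun_prop
  have hf0 : f 0 = 0 := by simp [hf_def, hw_def]
  set h : A := x * star x with hh_def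
  have hh : IsSelfAdjoint h := IsSelfAdjoint.mul_star_self x
  set e : A := cfcₙ f h with he_def
  have he : IsSelfAdjoint e := cfcₙ_predicate f h
  -- identification in the unitization
  have hhinr : (h : Unitization ℂ A) = (x : Unitization ℂ A) * star (x : Unitization ℂ A) := by
    rw [hh_def, Unitization.inr_mul, Unitization.inr_star]
  have hh' : IsSelfAdjoint (h : Unitization ℂ A) := Unitization.isSelfAdjoint_inr.mpr hh
  have heinr : (e : Unitization ℂ A) = cfc f (h : Unitization ℂ A) :=
    Unitization.real_cfcₙ_eq_cfc_inr h f hf0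
  have h1e : (1 : Unitization ℂ A) - e = cfc w (h : Unitization ℂ A) := by
    rw [heinr, ← cfc_const_one ℝ (h : Unitization ℂ A) hh',
      ← cfc_sub _ _ _ (by fun_prop) (by fun_prop)]
    exact cfc_congr fun s _ => by simp [hf_def]
  have h1e_norm : ‖(1 : Unitization ℂ A) - e‖ ≤ 1 := by
    rw [h1e]
    exact norm_cfc_le zero_le_one fun s _ => by
      rw [Real.norm_eq_abs, abs_of_pos (hwpos s)]; exact hwle s
  -- the key norm estimate
  have hnorm : ‖x - e * x‖ ≤ δ := by
    have hz : ‖x - e * x‖ ^ 2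
        = ‖((x : Unitization ℂ A) - e * x) * star ((x : Unitization ℂ A) - e * x)‖ := by
      rw [CStarRing.norm_self_mul_star, ← sq, ← Unitization.norm_inr (𝕜 := ℂ) (x - e * x)]
      congr 1
      push_cast [Unitization.inr_sub, Unitization.inr_mul]
      ring
    have hzz : ((x : Unitization ℂ A) - e * x) * star ((x : Unitization ℂ A) - e * x)
        = cfc (fun s => w s * (s * w s)) (h : Unitization ℂ A) := by
      have hstar : star ((e : Unitization ℂ A)) = e := (Unitization.isSelfAdjoint_inr.mpr he).star_eq
      have expand : ((x : Unitization ℂ A) - e * x) * star ((x : Unitization ℂ A) - e * x)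
          = (1 - e) * (h : Unitization ℂ A) * (1 - e) := by
        rw [hhinr]
        simp only [star_sub, star_mul, hstar]
        noncomm_ring
      rw [expand, h1e]
      nth_rewrite 2 [← cfc_id ℝ (h : Unitization ℂ A) hh']
      rw [← cfc_mul _ _ _ (by fun_prop) (by fun_prop), ← cfc_mul _ _ _ (by fun_prop) (by fun_prop)]
      exact cfc_congr fun s _ => by simp only [id_eq]; ring
    have hbound : ‖cfc (fun s => w s * (s * w s)) (h : Unitization ℂ A)‖ ≤ δ ^ 2 := by
      refine norm_cfc_le (by positivity) fun s _ => ?_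
      have hws : w s = (1 + u ^ 2 * s ^ 2)⁻¹ := rfl
      have hwpos' := hwpos s
      have hwle' := hwle s
      have key : |s| * w s ≤ δ ^ 2 := by
        rw [hws, ← div_eq_mul_inv, div_le_iff₀ (by positivity)]
        have hu' : u * δ ^ 2 = 1 / 2 := by rw [hu_def]; field_simp
        have e1 : δ ^ 2 * (1 + u ^ 2 * s ^ 2) - |s|
            = (1 - u * |s|) ^ 2 * δ ^ 2 + (2 * (u * δ ^ 2) - 1) * |s| := by
          linear_combination (-(δ ^ 2 * u ^ 2)) * sq_abs s
        rw [hu'] at e1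
        have e2 : (0:ℝ) ≤ (1 - u * |s|) ^ 2 * δ ^ 2 := by positivity
        nlinarith [e1, e2]
      calc ‖w s * (s * w s)‖ = w s * (|s| * w s) := by
            rw [Real.norm_eq_abs, abs_mul, abs_mul, abs_of_pos hwpos']
          _ ≤ 1 * (|s| * w s) := by
            apply mul_le_mul_of_nonneg_right hwle'
            positivity
          _ ≤ δ ^ 2 := by rw [one_mul]; exact key
    have h2 : ‖x - e * x‖ ^ 2 ≤ δ ^ 2 := by rw [hz, hzz]; exact hbound
    nlinarith [norm_nonneg (x - e * x)]
  have hmem : ∀ K : TwoSidedIdeal A, IsClosed (K : Set A) → x ∈ K → e ∈ K := fun K hK hx =>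
    cfcₙ_mul_star_self_mem K hK hx f hfc hf0
  exact ⟨e, he, hmem, h1e_norm, hnorm⟩

/-- Distance to the intersection: key C⋆ fact via approximate units. -/
theorem exists_inf_approx (I K : TwoSidedIdeal A) (hI : IsClosed (I : Set A))
    {y x : A} (hy : y ∈ K) (hx : x ∈ I) {δ : ℝ} (hδ : 0 < δ) :
    ∃ c ∈ I ⊓ K, ‖y - c‖ ≤ ‖y - x‖ + δ := by
  obtain ⟨e, he, hmem, h1, h2⟩ := exists_approxUnit x hδ
  have heI : e ∈ I := hmem I hI hx
  refine ⟨e * y, ⟨I.mul_mem_right e y heI, K.mul_mem_left e y hy⟩, ?_⟩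
  have key : ((y : Unitization ℂ A) - e * y)
      = (1 - (e : Unitization ℂ A)) * ((y : Unitization ℂ A) - x) + ((x : Unitization ℂ A) - e * x) := by
    noncomm_ring
  calc ‖y - e * y‖ = ‖(y : Unitization ℂ A) - e * y‖ := by
        rw [← Unitization.norm_inr (𝕜 := ℂ) (y - e * y)]
        push_cast [Unitization.inr_sub, Unitization.inr_mul]
        ring_nf
      _ = ‖(1 - (e : Unitization ℂ A)) * ((y : Unitization ℂ A) - x)
            + ((x : Unitization ℂ A) - e * x)‖ := by rw [key]
      _ ≤ ‖(1 - (e : Unitization ℂ A)) * ((y : Unitization ℂ A) - x)‖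
            + ‖(x : Unitization ℂ A) - e * x‖ := norm_add_le _ _
      _ ≤ ‖(1 : Unitization ℂ A) - e‖ * ‖(y : Unitization ℂ A) - x‖
            + ‖(x : Unitization ℂ A) - e * x‖ := by
          gcongr; exact norm_mul_le _ _
      _ ≤ 1 * ‖(y : Unitization ℂ A) - x‖ + δ := by
          gcongr
          rw [← Unitization.norm_inr (𝕜 := ℂ) (x - e * x)] at h2
          calc ‖(x : Unitization ℂ A) - e * x‖ = ‖((x - e * x : A) : Unitization ℂ A)‖ := by
                push_cast [Unitization.inr_sub, Unitization.inr_mul]; ring_nf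
              _ ≤ δ := h2
      _ = ‖y - x‖ + δ := by
          rw [one_mul, ← Unitization.norm_inr (𝕜 := ℂ) (y - x), Unitization.inr_sub]

/-- The sum of two closed two-sided ideals in a C⋆-algebra is closed. -/
theorem isClosed_sup_ideal (I K : TwoSidedIdeal A) (hI : IsClosed (I : Set A))
    (hK : IsClosed (K : Set A)) : IsClosed ((I ⊔ K : TwoSidedIdeal A) : Set A) := by
  refine isClosed_of_closure_subset fun z hz => ?_
  have hex : ∀ n : ℕ, ∃ w ∈ ((I ⊔ K : TwoSidedIdeal A) : Set A), dist z w < (1/2 : ℝ)^n :=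
    fun n => Metric.mem_closure_iff.mp hz _ (by positivity)
  choose w hw hwd using hex
  choose i hi k hk hik using fun n => TwoSidedIdeal.mem_sup.mp (hw n)
  have hc : ∀ n : ℕ, ∃ c ∈ I ⊓ K,
      ‖(k (n+1) - k n) - c‖ ≤ ‖(k (n+1) - k n) - (i n - i (n+1))‖ + (1/2 : ℝ)^n :=
    fun n => exists_inf_approx I K hI (sub_mem (hk (n+1)) (hk n))
      (sub_mem (hi n) (hi (n+1))) (by positivity)
  choose c hcIK hcb using hc
  have hwd2 : ∀ n, ‖(k (n+1) - k n) - (i n - i (n+1))‖ ≤ (1/2 : ℝ)^(n+1) + (1/2 : ℝ)^n := by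
    intro n
    have hrw : (k (n+1) - k n) - (i n - i (n+1)) = (w (n+1) - z) + (z - w n) := by
      rw [← hik n, ← hik (n+1)]; abel
    rw [hrw]
    refine (norm_add_le _ _).trans ?_
    rw [← dist_eq_norm, ← dist_eq_norm, dist_comm (w (n+1)) z]
    exact add_le_add (hwd (n+1)).le (hwd n).le
  set k' : ℕ → A := fun n => k n - ∑ j ∈ Finset.range n, c j with hk'_def
  have hk'K : ∀ n, k' n ∈ K :=
    fun n => sub_mem (hk n) (sum_mem fun j _ => (hcIK j).2)
  have hd : ∀ n, dist (k' n) (k' (n+1)) ≤ 4 * (1/2 : ℝ)^n := by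
    intro n
    have hrw : k' n - k' (n+1) = -((k (n+1) - k n) - c n) := by
      rw [hk'_def]
      simp only [Finset.sum_range_succ]
      abel
    rw [dist_eq_norm, hrw, norm_neg]
    refine (hcb n).trans ?_
    have := hwd2 n
    have hp : (1/2 : ℝ)^(n+1) ≤ (1/2 : ℝ)^n := by
      apply pow_le_pow_of_le_one <;> norm_num
    have hp0 : (0:ℝ) ≤ (1/2 : ℝ)^n := by positivity
    linarith
  obtain ⟨l, hl⟩ := cauchySeq_tendsto_of_complete
    (cauchySeq_of_le_geometric (1/2) 4 (by norm_num) hd)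
  have hlK : l ∈ K := hK.mem_of_tendsto hl (.of_forall hk'K)
  have hwz : Filter.Tendsto w Filter.atTop (nhds z) := by
    rw [tendsto_iff_dist_tendsto_zero]
    refine squeeze_zero (fun n => dist_nonneg) (fun n => (dist_comm (w n) z ▸ (hwd n).le)) ?_
    exact tendsto_pow_atTop_nhds_zero_of_lt_one (by norm_num) (by norm_num)
  have hiI : ∀ n, w n - k' n ∈ I := by
    intro n
    have hrw : w n - k' n = i n + ∑ j ∈ Finset.range n, c j := by
      rw [hk'_def, ← hik n]; simp only [add_sub_assoc, sub_sub_cancel]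
    rw [hrw]
    exact add_mem (hi n) (sum_mem fun j _ => (hcIK j).1)
  have hzl : z - l ∈ I := hI.mem_of_tendsto (hwz.sub hl) (.of_forall hiI)
  exact TwoSidedIdeal.mem_sup.mpr ⟨z - l, hzl, l, hlK, sub_add_cancel z l⟩

/-- Finite suprema of closed two-sided ideals are closed. -/
theorem isClosed_finsetSup {Λ : Type*} (f : Λ → TwoSidedIdeal A)
    (hf : ∀ l, IsClosed (f l : Set A)) (s : Finset Λ) :
    IsClosed ((s.sup f : TwoSidedIdeal A) : Set A) := by
  induction s using Finset.cons_induction with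
  | empty =>
    rw [Finset.sup_empty]
    have : ((⊥ : TwoSidedIdeal A) : Set A) = {0} := by
      ext x; simp [SetLike.mem_coe, TwoSidedIdeal.mem_bot]
    rw [this]
    exact isClosed_singleton
  | cons a s ha ih =>
    rw [Finset.sup_cons]
    exact isClosed_sup_ideal _ _ (hf a) ih

/-- Membership in a supremum of two-sided ideals gives a finite subsum. -/
theorem exists_finset_of_mem_iSup {Λ : Type*} (f : Λ → TwoSidedIdeal A) {x : A}
    (hx : x ∈ (⨆ l, f l : TwoSidedIdeal A)) : ∃ s : Finset Λ, x ∈ s.sup f := by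
  classical
  let Kb : TwoSidedIdeal A := TwoSidedIdeal.mk' {x : A | ∃ s : Finset Λ, x ∈ s.sup f}
    ⟨∅, (Finset.sup ∅ f).zero_mem⟩
    (by
      rintro x y ⟨s, hs⟩ ⟨t, ht⟩
      exact ⟨s ∪ t, (s ∪ t).sup f |>.add_mem
        (TwoSidedIdeal.le_iff.mp (Finset.sup_mono Finset.subset_union_left) hs)
        (TwoSidedIdeal.le_iff.mp (Finset.sup_mono Finset.subset_union_right) ht)⟩)
    (by rintro x ⟨s, hs⟩; exact ⟨s, (s.sup f).neg_mem hs⟩)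
    (by rintro x y ⟨s, hs⟩; exact ⟨s, (s.sup f).mul_mem_left x y hs⟩)
    (by rintro x y ⟨s, hs⟩; exact ⟨s, (s.sup f).mul_mem_right x y hs⟩)
  have hle : (⨆ l, f l : TwoSidedIdeal A) ≤ Kb := by
    refine iSup_le fun l => ?_
    intro z hz
    exact (TwoSidedIdeal.mem_mk' _ _ _ _ _ _ z).mpr
      ⟨{l}, by simpa [Finset.sup_singleton] using hz⟩
  exact (TwoSidedIdeal.mem_mk' _ _ _ _ _ _ x).mp (hle hx)

/-- The closure of the union of a monotone sequence of two-sided ideals, as a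
two-sided ideal. -/
noncomputable def closureUnionIdeal (G : ℕ → TwoSidedIdeal A) (hmono : Monotone G) :
    TwoSidedIdeal A :=
  TwoSidedIdeal.mk' (closure (⋃ n, (G n : Set A)))
    (subset_closure <| Set.mem_iUnion.mpr ⟨0, (G 0).zero_mem⟩)
    (fun {x y} hx hy => by
      refine map_mem_closure₂ continuous_add hx hy ?_
      rintro a ha b hb
      obtain ⟨m, ham⟩ := Set.mem_iUnion.mp ha
      obtain ⟨n, hbn⟩ := Set.mem_iUnion.mp hb
      exact Set.mem_iUnion.mpr ⟨max m n, (G (max m n)).add_mem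
        (hmono (le_max_left m n) ham) (hmono (le_max_right m n) hbn)⟩)
    (fun {x} hx => by
      refine map_mem_closure continuous_neg hx ?_
      rintro a ha
      obtain ⟨m, ham⟩ := Set.mem_iUnion.mp ha
      exact Set.mem_iUnion.mpr ⟨m, (G m).neg_mem ham⟩)
    (fun {x y} hy => by
      refine map_mem_closure (f := (x * ·)) (continuous_mul_left x) hy ?_
      rintro a ha
      obtain ⟨m, ham⟩ := Set.mem_iUnion.mp ha
      exact Set.mem_iUnion.mpr ⟨m, (G m).mul_mem_left x a ham⟩)
    (fun {x y} hx => by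
      refine map_mem_closure (f := (· * y)) (continuous_mul_right y) hx ?_
      rintro a ha
      obtain ⟨m, ham⟩ := Set.mem_iUnion.mp ha
      exact Set.mem_iUnion.mpr ⟨m, (G m).mul_mem_right a y ham⟩)

lemma coe_closureUnionIdeal (G : ℕ → TwoSidedIdeal A) (hmono : Monotone G) :
    (closureUnionIdeal G hmono : Set A) = closure (⋃ n, (G n : Set A)) :=
  TwoSidedIdeal.coe_mk' _ _ _ _ _ _

end Aux

lemma subset_genClosedIdeal {A : Type*} [NonUnitalCStarAlgebra A] (s : Set A) :
    s ⊆ (genClosedIdeal s : Set A) := fun x hx =>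
  (TwoSidedIdeal.mem_sInf _).mpr fun _ hJ => hJ.2 hx

lemma genClosedIdeal_le {A : Type*} [NonUnitalCStarAlgebra A] {s : Set A}
    {K : TwoSidedIdeal A} (h1 : IsClosed (K : Set A)) (h2 : s ⊆ K) :
    genClosedIdeal s ≤ K := sInf_le ⟨h1, h2⟩

/-- On closed ideals containing a full element, compact containment coincides with the
sequential way-below relation: `I ⋐ J` iff for every increasing sequence of closed ideals
`(I_n)` with `J` contained in the closure of their union there is `n` with `I ⊆ I_n`. -/
theorem compactlyContained_iff_seq {A : Type*} [NonUnitalCStarAlgebra A]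
    (I J : TwoSidedIdeal A) (hI : IsClosed (I : Set A)) (hJ : IsClosed (J : Set A))
    (hfull : ∃ a ∈ J, genClosedIdeal {a} = J) :
    CompactlyContained I J ↔
      ∀ f : ℕ → TwoSidedIdeal A, (∀ n, IsClosed (f n : Set A)) → Monotone f →
        (J : Set A) ⊆ closure (⋃ n, (f n : Set A)) → ∃ n, I ≤ f n := by
  constructor
  · intro hcc f hcl hmono hJsub
    have hsub : (J : Set A) ⊆ closure ((⨆ n, f n : TwoSidedIdeal A) : Set A) := by
      refine hJsub.trans (closure_mono ?_)
      exact Set.iUnion_subset fun n => fun x hx =>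
        TwoSidedIdeal.le_iff.mp (le_iSup f n) hx
    obtain ⟨s, hs⟩ := hcc f hcl hsub
    refine ⟨s.sup id, ?_⟩
    have hle : s.sup f ≤ f (s.sup id) :=
      Finset.sup_le fun m hm => hmono (Finset.le_sup (f := id) hm)
    exact TwoSidedIdeal.le_iff.mpr (hs.trans (TwoSidedIdeal.le_iff.mp hle))
  · intro hseq Λ f hcl hJsub
    classical
    obtain ⟨a, haJ, hgen⟩ := hfull
    have haU : a ∈ closure ((⨆ l, f l : TwoSidedIdeal A) : Set A) := hJsub haJ
    choose y hy hyd using fun n => Metric.mem_closure_iff.mp haU ((1/2 : ℝ)^n) (by positivity)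
    choose s hs using fun n => exists_finset_of_mem_iSup f (hy n)
    set t : ℕ → Finset Λ := fun n => (Finset.range (n+1)).sup s with ht_def
    set G : ℕ → TwoSidedIdeal A := fun n => (t n).sup f with hG_def
    have hGcl : ∀ n, IsClosed (G n : Set A) := fun n => isClosed_finsetSup f hcl (t n)
    have htmono : ∀ {m n : ℕ}, m ≤ n → t m ⊆ t n := by
      intro m n hmn
      have : (Finset.range (m+1)).sup s ≤ (Finset.range (n+1)).sup s :=
        Finset.sup_mono (Finset.range_subset_range.mpr (Nat.succ_le_succ hmn))
      exact this
    have hGmono : Monotone G := fun m n hmn => by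
      show (t m).sup f ≤ (t n).sup f
      exact Finset.sup_mono (htmono hmn)
    have hyG : ∀ n, y n ∈ G n := by
      intro n
      have hst : s n ⊆ t n := Finset.le_sup (f := s) (Finset.self_mem_range_succ n)
      exact TwoSidedIdeal.le_iff.mp (Finset.sup_mono hst) (hs n)
    have hay : Filter.Tendsto y Filter.atTop (nhds a) := by
      rw [tendsto_iff_dist_tendsto_zero]
      refine squeeze_zero (fun n => dist_nonneg) (fun n => (dist_comm (y n) a ▸ (hyd n).le)) ?_
      exact tendsto_pow_atTop_nhds_zero_of_lt_one (by norm_num) (by norm_num)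
    have haG : a ∈ closure (⋃ n, (G n : Set A)) :=
      mem_closure_of_tendsto hay (Filter.Eventually.of_forall fun n =>
        Set.mem_iUnion.mpr ⟨n, hyG n⟩)
    have hJC : (J : Set A) ⊆ closure (⋃ n, (G n : Set A)) := by
      have hCcl : IsClosed ((closureUnionIdeal G hGmono : TwoSidedIdeal A) : Set A) := by
        rw [coe_closureUnionIdeal]; exact isClosed_closure
      have hle : genClosedIdeal {a} ≤ closureUnionIdeal G hGmono := by
        refine genClosedIdeal_le hCcl ?_
        rw [Set.singleton_subset_iff, SetLike.mem_coe,
          ← SetLike.mem_coe, coe_closureUnionIdeal]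
        exact haG
      rw [hgen] at hle
      intro x hx
      have := TwoSidedIdeal.le_iff.mp hle hx
      rwa [coe_closureUnionIdeal] at this
    obtain ⟨n, hn⟩ := hseq G hGcl hGmono hJC
    exact ⟨t n, TwoSidedIdeal.le_iff.mp hn⟩
end

section
/- Let α : G → Aut(A) be a strongly continuous action of a topological group G on a C*-algebra A. Then the induced action α♯ of G on the primitive ideal space Prim(A), given by α♯_g(p) = α_g(p), is jointly continuous with respect to the Jacobson (hull-kernel) topology: for every open U ⊆ Prim(A), the set {(g,p) ∈ G × Prim(A) : α♯_g(p) ∈ U} is open in the product topology. -/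
open scoped CStarAlgebra

/-- In a unital C⋆-algebra with compatible order, `(t - ε²)⁺` applied (via the continuous
functional calculus) to `star s * s` vanishes iff `‖s‖ ≤ ε`. -/
lemma cfc_max_sub_eq_zero_iff {B : Type*} [CStarAlgebra B] [Nontrivial B] [PartialOrder B]
    [StarOrderedRing B] [NonnegSpectrumClass ℝ B] (s : B) {ε : ℝ} (hε : 0 < ε) :
    cfc (fun t : ℝ => max (t - ε ^ 2) 0) (star s * s) = 0 ↔ ‖s‖ ≤ ε := by
  set q : B := star s * s with hq_def
  have hq : (0 : B) ≤ q := star_mul_self_nonneg s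
  have hq_norm : ‖q‖ = ‖s‖ * ‖s‖ := CStarRing.norm_star_mul_self
  have hspec : ∀ x ∈ spectrum ℝ q, 0 ≤ x ∧ x ≤ ‖q‖ := by
    intro x hx
    refine ⟨spectrum_nonneg_of_nonneg hq hx, ?_⟩
    simpa [abs_of_nonneg (spectrum_nonneg_of_nonneg hq hx)] using
      spectrum.norm_le_norm_of_mem (𝕜 := ℝ) hx
  constructor
  · intro h
    have key : q = cfc (fun t : ℝ => min t (ε ^ 2)) q := by
      conv_lhs => rw [← cfc_id ℝ q]
      rw [show (id : ℝ → ℝ) = fun t => max (t - ε ^ 2) 0 + min t (ε ^ 2) by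
        funext t
        simp only [id]
        rcases le_total t (ε ^ 2) with h' | h'
        · rw [max_eq_right (by linarith), min_eq_left h', zero_add]
        · rw [max_eq_left (by linarith), min_eq_right h']; ring]
      rw [cfc_add q _ _ (by fun_prop) (by fun_prop), h, zero_add]
    have hnorm : ‖q‖ ≤ ε ^ 2 := by
      rw [key]
      refine norm_cfc_le (by positivity) fun x hx => ?_
      obtain ⟨hx0, _⟩ := hspec x hx
      rw [Real.norm_eq_abs, abs_of_nonneg (le_min hx0 (by positivity))]
      exact min_le_right _ _
    nlinarith [norm_nonneg s]
  · intro h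
    calc cfc (fun t : ℝ => max (t - ε ^ 2) 0) q = cfc (fun _ : ℝ => (0 : ℝ)) q := by
          refine cfc_congr fun x hx => ?_
          obtain ⟨_, hx2⟩ := hspec x hx
          have : x ≤ ε ^ 2 := hx2.trans (by nlinarith [norm_nonneg s])
          simp [max_eq_right, this]
      _ = 0 := by simp

/-- The image under an irreducible representation detects the quotient norm. -/
lemma pi_cfc_eq_zero_iff {A : Type u} [NonUnitalCStarAlgebra A] {H : Type u}
    [NormedAddCommGroup H] [InnerProductSpace ℂ H] [CompleteSpace H]
    (π : A →⋆ₙₐ[ℂ] (H →L[ℂ] H)) (hπ : π ≠ 0) (b : A) {ε : ℝ} (hε : 0 < ε) :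
    π (cfcₙ (fun t : ℝ => max (t - ε ^ 2) 0) (star b * b)) = 0 ↔ ‖π b‖ ≤ ε := by
  have : Nontrivial (H →L[ℂ] H) := by
    obtain ⟨a, ha⟩ : ∃ a, π a ≠ 0 := by
      by_contra h
      push_neg at h
      exact hπ (by ext a; simp [h a])
    exact ⟨π a, 0, ha⟩
  have hmap : π (cfcₙ (fun t : ℝ => max (t - ε ^ 2) 0) (star b * b)) =
      cfcₙ (fun t : ℝ => max (t - ε ^ 2) 0) (π (star b * b)) := by
    refine NonUnitalStarAlgHom.map_cfcₙ π _ _ ?_ (by simp [le_of_lt hε]) ?_ ?_ ?_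
    · fun_prop
    · exact map_continuous π
    · exact IsSelfAdjoint.star_mul_self b
    · exact (IsSelfAdjoint.star_mul_self b).map π
  rw [hmap, show π (star b * b) = star (π b) * π b by rw [map_mul, map_star],
    cfcₙ_eq_cfc (by fun_prop) (by simp [le_of_lt hε])]
  exact cfc_max_sub_eq_zero_iff (π b) hε

/-- A two-sided ideal of a C*-algebra is primitive if it is the kernel of a non-zero
(topologically) irreducible `*`-representation on a complex Hilbert space. -/
def IsPrimitiveIdeal {A : Type u} [NonUnitalCStarAlgebra A] (p : TwoSidedIdeal A) : Prop :=
  ∃ (H : Type u) (_ : NormedAddCommGroup H) (_ : InnerProductSpace ℂ H) (_ : CompleteSpace H)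
    (π : A →⋆ₙₐ[ℂ] (H →L[ℂ] H)), π ≠ 0 ∧
      (∀ S : Submodule ℂ H, IsClosed (S : Set H) → (∀ a x, x ∈ S → π a x ∈ S) →
        S = ⊥ ∨ S = ⊤) ∧
      ∀ a, a ∈ p ↔ π a = 0

/-- The primitive ideal space of a C*-algebra. -/
abbrev PrimIdeal (A : Type u) [NonUnitalCStarAlgebra A] : Type u :=
  {p : TwoSidedIdeal A // IsPrimitiveIdeal p}

/-- The Jacobson (hull-kernel) topology on the primitive ideal space: open sets are generated
by the sets `{p | ¬ I ≤ p}` for ideals `I`. -/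
instance {A : Type u} [NonUnitalCStarAlgebra A] : TopologicalSpace (PrimIdeal A) :=
  TopologicalSpace.generateFrom
    {U : Set (PrimIdeal A) | ∃ I : TwoSidedIdeal A, U = {p | ¬ I ≤ p.1}}

/-- For a strongly continuous action `α` of a topological group `G` on a C*-algebra `A`, the
induced action `α♯` on `Prim(A)`, `α♯_g(p) = α_g(p)`, is jointly continuous for the Jacobson
topology. -/
theorem primIdeal_action_continuous {G : Type*} [Group G] [TopologicalSpace G]
    [IsTopologicalGroup G] {A : Type u} [NonUnitalCStarAlgebra A]
    (α : G → A ≃⋆ₐ[ℂ] A)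
    (hα1 : α 1 = StarAlgEquiv.refl ℂ A)
    (hαmul : ∀ g h a, α (g * h) a = α g (α h a))
    (hcont : ∀ a : A, Continuous fun g => α g a)
    (F : G → PrimIdeal A → PrimIdeal A)
    (hF : ∀ g p, ((F g p).1 : Set A) = (α g) '' (p.1 : Set A)) :
    ∀ U : Set (PrimIdeal A), IsOpen U →
      IsOpen {x : G × PrimIdeal A | F x.1 x.2 ∈ U} := by
  -- a key membership criterion
  have hmem : ∀ (g : G) (p : PrimIdeal A) (a : A), a ∈ (F g p).1 ↔ α g⁻¹ a ∈ p.1 := by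
    intro g p a
    have h1 : ∀ x : A, α g⁻¹ (α g x) = x := fun x => by
      rw [← hαmul, inv_mul_cancel, hα1]; rfl
    have h2 : ∀ x : A, α g (α g⁻¹ x) = x := fun x => by
      rw [← hαmul, mul_inv_cancel, hα1]; rfl
    constructor
    · intro ha
      have : a ∈ ((F g p).1 : Set A) := ha
      rw [hF g p] at this
      obtain ⟨x, hx, rfl⟩ := this
      rwa [h1]
    · intro ha
      have : a ∈ (α g '' (p.1 : Set A)) := ⟨α g⁻¹ a, ha, h2 a⟩
      rw [← hF g p] at this
      exact this
  suffices hc : Continuous (fun x : G × PrimIdeal A => F x.1 x.2) by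
    intro U hU
    exact hc.isOpen_preimage U hU
  refine continuous_generateFrom_iff.mpr ?_
  rintro - ⟨I, rfl⟩
  rw [isOpen_iff_forall_mem_open]
  rintro ⟨g₀, p₀⟩ hx
  simp only [Set.mem_preimage, Set.mem_setOf_eq] at hx
  obtain ⟨a, haI, hap⟩ := SetLike.not_le_iff_exists.mp hx
  set b : A := α g₀⁻¹ a with hb_def
  have hbp₀ : b ∉ p₀.1 := fun h => hap ((hmem g₀ p₀ a).mpr h)
  obtain ⟨H₀, _, _, _, π₀, hπ₀ne, -, hker₀⟩ := p₀.2
  have hπ₀b : π₀ b ≠ 0 := fun h => hbp₀ ((hker₀ b).mpr h)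
  set ε : ℝ := ‖π₀ b‖ / 2 with hε_def
  have hπ₀bpos : 0 < ‖π₀ b‖ := norm_pos_iff.mpr hπ₀b
  have hε : 0 < ε := by rw [hε_def]; exact half_pos hπ₀bpos
  set c : A := cfcₙ (fun t : ℝ => max (t - ε ^ 2) 0) (star b * b) with hc_def
  -- the two open sets
  set W : Set (PrimIdeal A) := {p | ¬ TwoSidedIdeal.span {c} ≤ p.1} with hW_def
  have hWopen : IsOpen W := TopologicalSpace.isOpen_generateFrom_of_mem ⟨_, rfl⟩
  have hWmem : ∀ p : PrimIdeal A, p ∈ W ↔ c ∉ p.1 := by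
    intro p
    simp only [hW_def, Set.mem_setOf_eq, not_iff_not]
    constructor
    · intro h
      exact h (TwoSidedIdeal.subset_span rfl)
    · intro h x hxm
      exact TwoSidedIdeal.mem_span_iff.mp hxm p.1 (by simpa using h)
  set V : Set G := (fun g => α g⁻¹ a) ⁻¹' Metric.ball b ε with hV_def
  have hVopen : IsOpen V :=
    (Metric.isOpen_ball).preimage ((hcont a).comp continuous_inv)
  refine ⟨V ×ˢ W, ?_, hVopen.prod hWopen, ?_, ?_⟩
  · rintro ⟨g, p⟩ ⟨hgV, hpW⟩
    simp only [Set.mem_preimage, Set.mem_setOf_eq]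
    intro hle
    have hFa : α g⁻¹ a ∈ p.1 := (hmem g p a).mp (hle haI)
    obtain ⟨H, _, _, _, π, hπne, -, hker⟩ := p.2
    have hπc : π c ≠ 0 := fun h => (hWmem p).mp hpW ((hker c).mpr h)
    have hπb : ε < ‖π b‖ := by
      by_contra h
      push_neg at h
      exact hπc ((pi_cfc_eq_zero_iff π hπne b hε).mpr h)
    have hπb' : π (α g⁻¹ a) = 0 := (hker _).mp hFa
    have : ‖π b‖ ≤ ‖b - α g⁻¹ a‖ := by
      calc ‖π b‖ = ‖π (b - α g⁻¹ a)‖ := by rw [map_sub, hπb', sub_zero]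
        _ ≤ ‖b - α g⁻¹ a‖ := NonUnitalStarAlgHom.norm_apply_le π _
    have hdist : ‖α g⁻¹ a - b‖ < ε := by simpa [hV_def, Metric.mem_ball, dist_eq_norm] using hgV
    rw [← norm_neg, neg_sub] at hdist
    exact lt_irrefl ε (lt_of_lt_of_le hπb (this.trans hdist.le))
  · show (α g₀⁻¹) a ∈ Metric.ball b ε
    rw [← hb_def]
    exact Metric.mem_ball_self hε
  · refine (hWmem p₀).mpr fun hc => ?_
    have h1 := (hker₀ c).mp hc
    have h2 := (pi_cfc_eq_zero_iff π₀ hπ₀ne b hε).mp h1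
    rw [hε_def] at h2
    exact absurd h2 (not_le.mpr (half_lt_self hπ₀bpos))
end

section
/- Let β : G ↷ B be an action on a unital C*-algebra B, and (φ, u), (ψ, v) : (A, α) → (B ⊗ K, β ⊗ id_K) proper cocycle morphisms landing in the corner B ⊗ e₁₁ (i.e., φ = κ∘φ₀, ψ = κ∘ψ₀ for unital φ₀, ψ₀ : A → B, where κ(b) = b ⊗ e₁₁). If (κ∘φ₀, u) and (κ∘ψ₀, v) are strongly asymptotically unitarily equivalent via a path v_t ∈ U(1 + B⊗K) with ‖[v_t, 1_B ⊗ e₁₁]‖ → 0, and the unitary group U(B) is connected, then (φ₀, u₀) and (ψ₀, v₀) are strongly asymptotically unitarily equivalent as proper cocycle morphisms into (B, β), where u₀, v₀ are the compressed cocycles; the witnessing path is obtained by compressing v_t by 1_B ⊗ e₁₁ and taking the unitary part of the polar decomposition. -/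
noncomputable section

namespace CompressAux

set_option linter.unusedSectionVars false

variable {B : Type*} [CStarAlgebra B] [Nontrivial B]

/-- The inverse square root via continuous functional calculus. -/
def invsq (s : B) : B := cfc (fun x : ℝ => (Real.sqrt x)⁻¹) s

lemma spec_dist (s : B) : ∀ x ∈ spectrum ℝ s, |x - 1| ≤ ‖s - 1‖ := by
  intro x hx
  have h1 : x - 1 ∈ spectrum ℝ (s - 1) := by
    rw [spectrum.mem_iff] at hx ⊢
    have : algebraMap ℝ B (x - 1) - (s - 1) = algebraMap ℝ B x - s := by
      rw [map_sub, map_one]; abel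
    rwa [this]
  simpa [Real.norm_eq_abs] using spectrum.norm_le_norm_of_mem h1

lemma spec_Icc {s : B} (hs : ‖s - 1‖ ≤ 2⁻¹) :
    spectrum ℝ s ⊆ Set.Icc (2⁻¹ : ℝ) (3/2) := by
  intro x hx
  have h := (spec_dist s x hx).trans hs
  rcases abs_le.mp h with ⟨h1, h2⟩
  exact ⟨by linarith, by linarith⟩

lemma invsq_contOn {s : B} (hs : ‖s - 1‖ ≤ 2⁻¹) :
    ContinuousOn (fun x : ℝ => (Real.sqrt x)⁻¹) (spectrum ℝ s) := by
  apply Real.continuous_sqrt.continuousOn.inv₀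
  intro x hx
  have hx1 := (spec_Icc hs hx).1
  have hx0 : (0:ℝ) < x := lt_of_lt_of_le (by norm_num) hx1
  exact Real.sqrt_ne_zero'.mpr hx0

lemma isUnit_of_close {s : B} (hs : ‖s - 1‖ ≤ 2⁻¹) : IsUnit s := by
  have h : ‖(1:B) - s‖ < 1 := by
    rw [norm_sub_rev]; linarith
  have := (Units.oneSub (1 - s) h).isUnit
  simpa [Units.val_oneSub, sub_sub_cancel] using this

lemma invsq_isSelfAdjoint (s : B) : IsSelfAdjoint (invsq s) := cfc_predicate _ s

lemma invsq_mul_self_mul {s : B} (hsa : IsSelfAdjoint s) (hs : ‖s - 1‖ ≤ 2⁻¹) :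
    invsq s * s * invsq s = 1 := by
  have hf := invsq_contOn hs
  rw [invsq]
  calc cfc (fun x : ℝ => (Real.sqrt x)⁻¹) s * s * cfc (fun x : ℝ => (Real.sqrt x)⁻¹) s
      = cfc (fun x : ℝ => (Real.sqrt x)⁻¹) s * cfc (fun x : ℝ => x) s
        * cfc (fun x : ℝ => (Real.sqrt x)⁻¹) s := by rw [cfc_id' ℝ s hsa]
    _ = cfc (fun x : ℝ => ((Real.sqrt x)⁻¹ * x) * (Real.sqrt x)⁻¹) s := by
        rw [cfc_mul (fun x : ℝ => (Real.sqrt x)⁻¹ * x) (fun x : ℝ => (Real.sqrt x)⁻¹) s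
              (hf.mul continuous_id'.continuousOn) hf,
            cfc_mul (fun x : ℝ => (Real.sqrt x)⁻¹) (fun x : ℝ => x) s hf continuous_id'.continuousOn]
    _ = cfc (fun _ : ℝ => (1:ℝ)) s := by
        apply cfc_congr
        intro x hx
        have hx1 := (spec_Icc hs hx).1
        have hx0 : (0:ℝ) < x := lt_of_lt_of_le (by norm_num) hx1
        have hsq : Real.sqrt x * Real.sqrt x = x := Real.mul_self_sqrt hx0.le
        have hne : Real.sqrt x ≠ 0 := Real.sqrt_ne_zero'.mpr hx0
        rw [← hsq]
        field_simp
        rw [Real.sqrt_sq (Real.sqrt_nonneg x)]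
    _ = 1 := by rw [cfc_const_one ℝ s]

lemma invsq_sq_mul {s : B} (hsa : IsSelfAdjoint s) (hs : ‖s - 1‖ ≤ 2⁻¹) :
    invsq s * invsq s * s = 1 := by
  have hf := invsq_contOn hs
  rw [invsq]
  calc cfc (fun x : ℝ => (Real.sqrt x)⁻¹) s * cfc (fun x : ℝ => (Real.sqrt x)⁻¹) s * s
      = cfc (fun x : ℝ => (Real.sqrt x)⁻¹) s * cfc (fun x : ℝ => (Real.sqrt x)⁻¹) s
        * cfc (fun x : ℝ => x) s := by rw [cfc_id' ℝ s hsa]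
    _ = cfc (fun x : ℝ => ((Real.sqrt x)⁻¹ * (Real.sqrt x)⁻¹) * x) s := by
        rw [cfc_mul (fun x : ℝ => (Real.sqrt x)⁻¹ * (Real.sqrt x)⁻¹) (fun x : ℝ => x) s
              (hf.mul hf) continuous_id'.continuousOn,
            cfc_mul (fun x : ℝ => (Real.sqrt x)⁻¹) (fun x : ℝ => (Real.sqrt x)⁻¹) s hf hf]
    _ = cfc (fun _ : ℝ => (1:ℝ)) s := by
        apply cfc_congr
        intro x hx
        have hx1 := (spec_Icc hs hx).1
        have hx0 : (0:ℝ) < x := lt_of_lt_of_le (by norm_num) hx1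
        have hsq : Real.sqrt x * Real.sqrt x = x := Real.mul_self_sqrt hx0.le
        have hne : Real.sqrt x ≠ 0 := Real.sqrt_ne_zero'.mpr hx0
        rw [← hsq]
        field_simp
        rw [Real.sqrt_sq (Real.sqrt_nonneg x)]
    _ = 1 := by rw [cfc_const_one ℝ s]

lemma invsq_norm_sub_one {s : B} (hsa : IsSelfAdjoint s) (hs : ‖s - 1‖ ≤ 2⁻¹) :
    ‖invsq s - 1‖ ≤ ‖s - 1‖ := by
  have hf := invsq_contOn hs
  have key : invsq s - 1 = cfc (fun x : ℝ => (Real.sqrt x)⁻¹ - 1) s := by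
    rw [cfc_sub _ _ s hf continuousOn_const, invsq, cfc_const_one ℝ s]
  rw [key]
  apply norm_cfc_le (norm_nonneg _)
  intro x hx
  have hxI := spec_Icc hs hx
  have hx0 : (0:ℝ) < x := lt_of_lt_of_le (by norm_num) hxI.1
  have hd := spec_dist s x hx
  rw [Real.norm_eq_abs]
  -- |(√x)⁻¹ - 1| ≤ |x - 1| ≤ ‖s - 1‖
  refine le_trans ?_ hd
  set t := Real.sqrt x with ht
  have hts : t * t = x := Real.mul_self_sqrt hx0.le
  have ht7 : (0.7 : ℝ) ≤ t := by
    rw [ht]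
    rw [show (0.7:ℝ) = Real.sqrt 0.49 by
      rw [show (0.49:ℝ) = 0.7 ^ 2 by norm_num, Real.sqrt_sq (by norm_num)]]
    exact Real.sqrt_le_sqrt (by nlinarith [hxI.1])
  have ht0 : (0:ℝ) < t := by linarith
  have h1t : |t⁻¹ - 1| * t = |t - 1| := by
    have h := abs_mul (t⁻¹ - 1) t
    rw [show (t⁻¹ - 1) * t = -(t - 1) by field_simp; ring, abs_neg, abs_of_pos ht0] at h
    exact h.symm
  have h2t : |x - 1| = |t - 1| * (t + 1) := by
    have h := abs_mul (t - 1) (t + 1)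
    rw [show (t - 1) * (t + 1) = t * t - 1 by ring, hts,
      abs_of_pos (show (0:ℝ) < t + 1 by linarith)] at h
    exact h
  nlinarith [abs_nonneg (t⁻¹ - 1), abs_nonneg (t - 1), h1t, h2t, ht7, ht0]

/-- Unitary part of the polar decomposition. -/
def upart (b : B) : B := b * invsq (star b * b)

lemma isSelfAdjoint_star_mul_self (b : B) : IsSelfAdjoint (star b * b) := by
  rw [IsSelfAdjoint, star_mul, star_star]

lemma upart_isUnit {b : B} (h1 : ‖star b * b - 1‖ ≤ 2⁻¹) (h2 : ‖b * star b - 1‖ ≤ 2⁻¹) :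
    IsUnit b := by
  obtain ⟨U, hU⟩ := isUnit_of_close h2
  -- left inverse of b
  have hly : (invsq (star b * b) * invsq (star b * b) * star b) * b = 1 := by
    rw [mul_assoc]
    exact invsq_sq_mul (isSelfAdjoint_star_mul_self b) h1
  -- right inverse of b
  have hr : b * (star b * (↑U⁻¹ : B)) = 1 := by
    rw [← mul_assoc, ← hU, Units.mul_inv]
  have hLR : invsq (star b * b) * invsq (star b * b) * star b = star b * (↑U⁻¹ : B) := by
    calc invsq (star b * b) * invsq (star b * b) * star b
        = invsq (star b * b) * invsq (star b * b) * star b * (b * (star b * ↑U⁻¹)) := by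
          rw [hr, mul_one]
      _ = (invsq (star b * b) * invsq (star b * b) * star b * b) * (star b * ↑U⁻¹) := by
          simp [mul_assoc]
      _ = star b * ↑U⁻¹ := by rw [hly, one_mul]
  refine ⟨⟨b, star b * (↑U⁻¹ : B), hr, ?_⟩, rfl⟩
  rw [← hLR]; exact hly


lemma mul_invsq_sq_star {b : B} (h1 : ‖star b * b - 1‖ ≤ 2⁻¹) (h2 : ‖b * star b - 1‖ ≤ 2⁻¹) :
    b * (invsq (star b * b) * invsq (star b * b) * star b) = 1 := by
  obtain ⟨U, hU⟩ := isUnit_of_close h2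
  have hr : b * (star b * (↑U⁻¹ : B)) = 1 := by
    rw [← mul_assoc, ← hU, Units.mul_inv]
  have hly : (invsq (star b * b) * invsq (star b * b) * star b) * b = 1 := by
    rw [mul_assoc]
    exact invsq_sq_mul (isSelfAdjoint_star_mul_self b) h1
  calc b * (invsq (star b * b) * invsq (star b * b) * star b)
      = b * ((invsq (star b * b) * invsq (star b * b) * star b) * (b * (star b * ↑U⁻¹))) := by
        rw [hr, mul_one]
    _ = b * (((invsq (star b * b) * invsq (star b * b) * star b) * b) * (star b * ↑U⁻¹)) := by
        simp only [mul_assoc]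
    _ = b * (star b * ↑U⁻¹) := by rw [hly, one_mul]
    _ = 1 := hr

lemma upart_mem_unitary {b : B} (h1 : ‖star b * b - 1‖ ≤ 2⁻¹) (h2 : ‖b * star b - 1‖ ≤ 2⁻¹) :
    upart b ∈ unitary B := by
  have hsa := isSelfAdjoint_star_mul_self b
  have hz := invsq_isSelfAdjoint (star b * b)
  rw [Unitary.mem_iff]
  constructor
  · have key := invsq_mul_self_mul hsa h1
    rw [upart, star_mul, hz.star_eq]
    calc invsq (star b * b) * star b * (b * invsq (star b * b))
        = invsq (star b * b) * (star b * b) * invsq (star b * b) := by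
          simp only [mul_assoc]
      _ = 1 := key
  · have key := mul_invsq_sq_star h1 h2
    rw [upart, star_mul, hz.star_eq]
    calc b * invsq (star b * b) * (invsq (star b * b) * star b)
        = b * (invsq (star b * b) * invsq (star b * b) * star b) := by
          simp only [mul_assoc]
      _ = 1 := key

lemma norm_upart_sub {b : B} (h1 : ‖star b * b - 1‖ ≤ 2⁻¹) :
    ‖upart b - b‖ ≤ ‖b‖ * ‖star b * b - 1‖ := by
  have : upart b - b = b * (invsq (star b * b) - 1) := by rw [upart, mul_sub, mul_one]
  rw [this]
  refine (norm_mul_le _ _).trans ?_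
  exact mul_le_mul_of_nonneg_left
    (invsq_norm_sub_one (isSelfAdjoint_star_mul_self b) h1) (norm_nonneg b)

lemma upart_of_unitary {u : B} (hu : u ∈ unitary B) : upart u = u := by
  have h1 : star u * u = 1 := (Unitary.mem_iff.mp hu).1
  rw [upart, h1]
  have h2 : invsq (1 : B) = 1 := by
    rw [invsq]
    have he : cfc (fun x : ℝ => (Real.sqrt x)⁻¹) (1:B) = cfc (fun _ : ℝ => (1:ℝ)) (1:B) := by
      apply cfc_congr
      intro x hx
      have hd := spec_dist (1 : B) x hx
      rw [sub_self, norm_zero] at hd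
      have hx1 : x = 1 := by
        have h0 := le_antisymm hd (abs_nonneg _)
        rw [abs_eq_zero] at h0
        linarith
      subst hx1
      simp [Real.sqrt_one]
    rw [he, cfc_const_one ℝ (1:B)]
  rw [h2, mul_one]

lemma upart_continuous {X : Type*} [TopologicalSpace X] (b : X → B) (hb : Continuous b)
    (h : ∀ x, ‖star (b x) * b x - 1‖ ≤ 2⁻¹) : Continuous fun x => upart (b x) := by
  have hS : Continuous fun x => star (b x) * b x := hb.star.mul hb
  suffices hc : Continuous fun x => invsq (star (b x) * b x) by
    exact hb.mul hc
  have hfc : ContinuousOn (fun y : ℝ => (Real.sqrt y)⁻¹) (Set.Icc (2⁻¹:ℝ) (3/2)) := by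
    apply Real.continuous_sqrt.continuousOn.inv₀
    intro y hy
    exact Real.sqrt_ne_zero'.mpr (lt_of_lt_of_le (by norm_num) hy.1)
  have key : ∀ n : ℕ, ∃ p : Polynomial ℝ, ∀ y ∈ Set.Icc (2⁻¹:ℝ) (3/2),
      |Polynomial.eval y p - (Real.sqrt y)⁻¹| < 1/(n+1) := fun n =>
    exists_polynomial_near_of_continuousOn _ _ _ hfc _ (by positivity)
  choose p hp using key
  have hest : ∀ (n : ℕ) (x : X),
      ‖invsq (star (b x) * b x) - Polynomial.aeval (star (b x) * b x) (p n)‖ ≤ 1/(n+1) := by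
    intro n x
    have hsa := isSelfAdjoint_star_mul_self (b x)
    have hfx := invsq_contOn (h x)
    have hpoly : (Polynomial.aeval (star (b x) * b x) (p n) : B)
        = cfc (p n).eval (star (b x) * b x) :=
      (cfc_polynomial (p n) (star (b x) * b x) hsa).symm
    rw [invsq, hpoly, ← cfc_sub _ _ _ hfx (p n).continuous.continuousOn]
    apply norm_cfc_le (by positivity)
    intro y hy
    have hyI := spec_Icc (h x) hy
    have hlt := hp n y hyI
    rw [Real.norm_eq_abs, abs_sub_comm]
    exact hlt.le
  have htu : TendstoUniformly (fun (n : ℕ) (x : X) =>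
      (Polynomial.aeval (star (b x) * b x) (p n) : B))
      (fun x => invsq (star (b x) * b x)) Filter.atTop := by
    rw [Metric.tendstoUniformly_iff]
    intro ε hε
    obtain ⟨N, hN⟩ := exists_nat_one_div_lt hε
    refine Filter.eventually_atTop.mpr ⟨N, fun n hn x => ?_⟩
    rw [dist_eq_norm]
    calc ‖invsq (star (b x) * b x) - Polynomial.aeval (star (b x) * b x) (p n)‖
        ≤ 1/(n+1) := hest n x
      _ ≤ 1/(N+1) := by
          apply one_div_le_one_div_of_le (by positivity)
          have : (N:ℝ) ≤ n := Nat.cast_le.mpr hn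
          linarith
      _ < ε := hN
  exact htu.continuous (Filter.Frequently.of_forall fun n =>
    ((p n).continuous_aeval).comp hS)
lemma norm_le_one_of_unitary {x : B} (hx : x ∈ unitary B) : ‖x‖ ≤ 1 :=
  le_of_eq (CStarRing.norm_of_mem_unitary hx)

lemma joinedIn_mul {x y : B} (hx : JoinedIn {z : B | z ∈ unitary B} 1 x)
    (hy : JoinedIn {z : B | z ∈ unitary B} 1 y) :
    JoinedIn {z : B | z ∈ unitary B} 1 (x * y) := by
  obtain ⟨γ₁, hγ₁⟩ := hx
  obtain ⟨γ₂, hγ₂⟩ := hy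
  refine ⟨⟨⟨fun t => γ₁ t * γ₂ t, γ₁.continuous.mul γ₂.continuous⟩, ?_, ?_⟩, fun t => ?_⟩
  · show γ₁ 0 * γ₂ 0 = 1
    rw [γ₁.source, γ₂.source, one_mul]
  · show γ₁ 1 * γ₂ 1 = x * y
    rw [γ₁.target, γ₂.target]
  · show γ₁ t * γ₂ t ∈ unitary B
    exact mul_mem (show (γ₁ t : B) ∈ unitary B from hγ₁ t)
      (show (γ₂ t : B) ∈ unitary B from hγ₂ t)

lemma joinedIn_one_of_norm_lt {u : B} (hu : u ∈ unitary B) (hn : ‖u - 1‖ < 1) :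
    JoinedIn {z : B | z ∈ unitary B} 1 u := by
  have hu1 : star u * u = 1 := (Unitary.mem_iff.mp hu).1
  have hu2 : u * star u = 1 := (Unitary.mem_iff.mp hu).2
  set c : ℝ → B := fun t => 1 + t • (u - 1) with hc
  have hcont : Continuous c := by
    apply continuous_const.add
    exact continuous_id.smul continuous_const
  have hstar : ∀ t : ℝ, star (c t) = 1 + t • (star u - 1) := by
    intro t
    simp [hc, star_smul, star_sub, star_one]
  have hprod1 : (star u - 1) * (u - 1) = 1 + 1 - u - star u := by
    have e : (star u - 1) * (u - 1) = star u * u - star u - u + 1 := by noncomm_ring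
    rw [e, hu1]; abel
  have hprod2 : (u - 1) * (star u - 1) = 1 + 1 - u - star u := by
    have e : (u - 1) * (star u - 1) = u * star u - u - star u + 1 := by noncomm_ring
    rw [e, hu2]; abel
  have hexp : ∀ (a b' : B) (t : ℝ), (1 + t • a) * (1 + t • b')
      = 1 + t • b' + t • a + (t * t) • (a * b') := by
    intro a b' t
    simp only [mul_add, add_mul, one_mul, mul_one, smul_mul_assoc, mul_smul_comm, smul_smul,
      smul_add]
    abel
  have hkey1 : ∀ t : ℝ, star (c t) * c t = 1 + (t - t^2) • (u + star u - 1 - 1) := by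
    intro t
    rw [hstar, hc]
    show (1 + t • (star u - 1)) * (1 + t • (u - 1)) = _
    rw [hexp, hprod1]
    module
  have hkey2 : ∀ t : ℝ, c t * star (c t) = 1 + (t - t^2) • (u + star u - 1 - 1) := by
    intro t
    rw [hstar, hc]
    show (1 + t • (u - 1)) * (1 + t • (star u - 1)) = _
    rw [hexp, hprod2]
    module
  have hmnorm : ‖u + star u - 1 - 1‖ ≤ 2 * ‖u - 1‖ := by
    have e : u + star u - 1 - 1 = (u - 1) + star (u - 1) := by
      rw [star_sub, star_one]; abel
    rw [e]
    refine (norm_add_le _ _).trans ?_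
    rw [norm_star]
    linarith
  have hcoef : ∀ t ∈ Set.Icc (0:ℝ) 1, ‖(t - t^2) • (u + star u - 1 - 1)‖ ≤ 2⁻¹ := by
    intro t ht
    rw [norm_smul, Real.norm_eq_abs]
    have ht' : |t - t^2| ≤ 4⁻¹ := by
      rw [abs_of_nonneg (by nlinarith [mul_nonneg ht.1 (sub_nonneg.mpr ht.2)])]
      nlinarith [sq_nonneg (t - 2⁻¹)]
    calc |t - t^2| * ‖u + star u - 1 - 1‖ ≤ 4⁻¹ * (2 * ‖u - 1‖) := by
          apply mul_le_mul ht' hmnorm (norm_nonneg _) (by norm_num)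
      _ ≤ 2⁻¹ := by nlinarith [hn]
  have hb1 : ∀ t ∈ Set.Icc (0:ℝ) 1, ‖star (c t) * c t - 1‖ ≤ 2⁻¹ := by
    intro t ht
    rw [hkey1 t, add_sub_cancel_left]
    exact hcoef t ht
  have hb2 : ∀ t ∈ Set.Icc (0:ℝ) 1, ‖c t * star (c t) - 1‖ ≤ 2⁻¹ := by
    intro t ht
    rw [hkey2 t, add_sub_cancel_left]
    exact hcoef t ht
  refine ⟨⟨⟨fun τ : unitInterval => upart (c τ), ?_⟩, ?_, ?_⟩, fun τ => ?_⟩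
  · exact upart_continuous (fun τ : unitInterval => c ↑τ)
      (hcont.comp continuous_subtype_val) (fun τ => hb1 _ τ.2)
  · show upart (c ((0 : unitInterval) : ℝ)) = 1
    have : c ((0 : unitInterval) : ℝ) = 1 := by simp [hc]
    rw [this]
    exact upart_of_unitary (one_mem (unitary B))
  · show upart (c ((1 : unitInterval) : ℝ)) = u
    have : c ((1 : unitInterval) : ℝ) = u := by simp [hc]
    rw [this]
    exact upart_of_unitary hu
  · exact upart_mem_unitary (hb1 _ τ.2) (hb2 _ τ.2)

lemma joinedIn_one_of_connected (hUB : IsConnected {x : B | x ∈ unitary B}) {z : B}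
    (hz : z ∈ unitary B) : JoinedIn {x : B | x ∈ unitary B} 1 z := by
  set S := {x : B | x ∈ unitary B} with hS
  have hstep : ∀ x y : B, x ∈ unitary B → y ∈ unitary B → dist y x < 1 →
      JoinedIn S 1 x → JoinedIn S 1 y := by
    intro x y hxu hyu hd hjx
    have hz' : y * star x ∈ unitary B := mul_mem hyu (Unitary.star_mem hxu)
    have hnorm : ‖y * star x - 1‖ < 1 := by
      have hxx : x * star x = 1 := (Unitary.mem_iff.mp hxu).2
      have e : y * star x - 1 = (y - x) * star x := by rw [sub_mul, hxx]
      rw [e]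
      calc ‖(y - x) * star x‖ ≤ ‖y - x‖ * ‖star x‖ := norm_mul_le _ _
        _ ≤ ‖y - x‖ * 1 := by
            apply mul_le_mul_of_nonneg_left _ (norm_nonneg _)
            rw [norm_star]
            exact norm_le_one_of_unitary hxu
        _ < 1 := by rw [mul_one, ← dist_eq_norm]; exact hd
    have hj1 : JoinedIn S 1 (y * star x) := joinedIn_one_of_norm_lt hz' hnorm
    have hj2 := joinedIn_mul hj1 hjx
    have he : y * star x * x = y := by
      rw [mul_assoc, (Unitary.mem_iff.mp hxu).1, mul_one]
    rwa [he] at hj2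
  by_contra hcon
  set U := ⋃ x ∈ {x : B | x ∈ unitary B ∧ JoinedIn S 1 x}, Metric.ball x 1 with hU
  set V := ⋃ x ∈ {x : B | x ∈ unitary B ∧ ¬ JoinedIn S 1 x}, Metric.ball x 1 with hV
  have hUopen : IsOpen U := isOpen_biUnion fun _ _ => Metric.isOpen_ball
  have hVopen : IsOpen V := isOpen_biUnion fun _ _ => Metric.isOpen_ball
  have hcover : S ⊆ U ∪ V := by
    intro x hx
    by_cases h : JoinedIn S 1 x
    · exact Or.inl (Set.mem_biUnion ⟨hx, h⟩ (Metric.mem_ball_self one_pos))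
    · exact Or.inr (Set.mem_biUnion ⟨hx, h⟩ (Metric.mem_ball_self one_pos))
  have h1S : (1 : B) ∈ S := one_mem (unitary B)
  have h1U : (1 : B) ∈ U :=
    Set.mem_biUnion ⟨h1S, JoinedIn.refl h1S⟩ (Metric.mem_ball_self one_pos)
  have hzV : z ∈ V := Set.mem_biUnion ⟨hz, hcon⟩ (Metric.mem_ball_self one_pos)
  obtain ⟨y, hyS, hyU, hyV⟩ := hUB.isPreconnected U V hUopen hVopen hcover
    ⟨1, h1S, h1U⟩ ⟨z, hz, hzV⟩
  obtain ⟨x₁, hx₁, hyb₁⟩ := Set.mem_iUnion₂.mp hyU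
  obtain ⟨x₂, hx₂, hyb₂⟩ := Set.mem_iUnion₂.mp hyV
  have hyJ : JoinedIn S 1 y :=
    hstep x₁ y hx₁.1 hyS (Metric.mem_ball.mp hyb₁) hx₁.2
  have hx₂J : JoinedIn S 1 x₂ :=
    hstep y x₂ hyS hx₂.1 (by rw [dist_comm]; exact Metric.mem_ball.mp hyb₂) hyJ
  exact hx₂.2 hx₂J
end CompressAux

noncomputable def CompressAux.emb {B C : Type*} [CStarAlgebra B] [NonUnitalCStarAlgebra C]
    (κ : B →⋆ₙₐ[ℂ] C) (x : B) : Unitization ℂ C := ((κ x : C) : Unitization ℂ C)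

section AuxNorm

variable {R : Type*} [CStarAlgebra R]

lemma CompressAux.triple_diff (x y q z z' : R)
    (hy : ‖y‖ ≤ 1) (hz : ‖z‖ ≤ 1) :
    ‖x * q * z - y * q * z'‖ ≤ (‖x - y‖ + ‖z - z'‖) * ‖q‖ := by
  have e : x * q * z - y * q * z' = (x - y) * q * z + y * q * (z - z') := by noncomm_ring
  rw [e]
  refine (norm_add_le _ _).trans ?_
  have e1 : ‖(x - y) * q * z‖ ≤ ‖x - y‖ * ‖q‖ := by
    calc ‖(x - y) * q * z‖ ≤ ‖(x - y) * q‖ * ‖z‖ := norm_mul_le _ _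
      _ ≤ ‖(x - y) * q‖ * 1 := by
          apply mul_le_mul_of_nonneg_left hz (norm_nonneg _)
      _ = ‖(x - y) * q‖ := mul_one _
      _ ≤ ‖x - y‖ * ‖q‖ := norm_mul_le _ _
  have e2 : ‖y * q * (z - z')‖ ≤ ‖z - z'‖ * ‖q‖ := by
    calc ‖y * q * (z - z')‖ ≤ ‖y * q‖ * ‖z - z'‖ := norm_mul_le _ _
      _ ≤ ‖y‖ * ‖q‖ * ‖z - z'‖ := by
          apply mul_le_mul_of_nonneg_right (norm_mul_le _ _) (norm_nonneg _)
      _ ≤ 1 * ‖q‖ * ‖z - z'‖ := by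
          apply mul_le_mul_of_nonneg_right
            (mul_le_mul_of_nonneg_right hy (norm_nonneg _)) (norm_nonneg _)
      _ = ‖z - z'‖ * ‖q‖ := by ring
  calc ‖(x - y) * q * z‖ + ‖y * q * (z - z')‖ ≤ ‖x - y‖ * ‖q‖ + ‖z - z'‖ * ‖q‖ :=
        add_le_add e1 e2
    _ = (‖x - y‖ + ‖z - z'‖) * ‖q‖ := by ring

lemma CompressAux.sandwich_norm (x y f : R) (hP : ‖x‖ ≤ 1) :
    ‖x * y * x - x * f * x‖ ≤ ‖y - f‖ := by
  have e : x * y * x - x * f * x = x * (y - f) * x := by noncomm_ring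
  rw [e]
  calc ‖x * (y - f) * x‖ ≤ ‖x * (y - f)‖ * ‖x‖ := norm_mul_le _ _
    _ ≤ ‖x‖ * ‖y - f‖ * ‖x‖ := by
        apply mul_le_mul_of_nonneg_right (norm_mul_le _ _) (norm_nonneg _)
    _ ≤ 1 * ‖y - f‖ * 1 := by
        apply mul_le_mul (mul_le_mul_of_nonneg_right hP (norm_nonneg _)) hP (norm_nonneg _)
        positivity
    _ = ‖y - f‖ := by ring

lemma CompressAux.norm_mul_le_one_left {x : R} (d : R) (hx : ‖x‖ ≤ 1) : ‖x * d‖ ≤ ‖d‖ :=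
  (norm_mul_le _ _).trans (by nlinarith [norm_nonneg d, norm_nonneg x])

lemma CompressAux.norm_mul_le_one_right {y : R} (d : R) (hy : ‖y‖ ≤ 1) : ‖d * y‖ ≤ ‖d‖ :=
  (norm_mul_le _ _).trans (by nlinarith [norm_nonneg d, norm_nonneg y])

lemma CompressAux.norm_mul_le_one {x y : R} (hx : ‖x‖ ≤ 1) (hy : ‖y‖ ≤ 1) : ‖x * y‖ ≤ 1 :=
  (norm_mul_le _ _).trans (by nlinarith [norm_nonneg x, norm_nonneg y])

lemma CompressAux.real_biSup_zero {G : Type*} (K : Set G) :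
    (⨆ g ∈ K, (0:ℝ)) = 0 :=
  le_antisymm (Real.iSup_le (fun g => Real.iSup_le (fun _ => le_rfl) le_rfl) le_rfl)
    (Real.iSup_nonneg fun g => Real.iSup_nonneg fun _ => le_rfl)

end AuxNorm

set_option maxHeartbeats 2000000 in
open CompressAux in
/-- Compression of a strong asymptotic unitary equivalence to a corner: if two proper cocycle
morphisms into `B ⊗ K` landing in the corner `B ⊗ e₁₁` (realized by `κ : B → C`, `C = B ⊗ K`)
are strongly asymptotically unitarily equivalent via a path asymptotically commuting with
`1_B ⊗ e₁₁ = κ(1)`, and the unitary group of `B` is connected, then the compressed unital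
morphisms into `B` are strongly asymptotically unitarily equivalent. -/
theorem compress_strong_asymptotic_unitary_equivalence
    {G : Type*} [Group G] [TopologicalSpace G] [IsTopologicalGroup G]
    {A : Type*} [CStarAlgebra A] {B : Type*} [CStarAlgebra B]
    {C : Type*} [NonUnitalCStarAlgebra C]
    -- actions on `A`, `B` and on `C = B ⊗ K` (`γ = β ⊗ id_K`)
    (αA : G → A ≃⋆ₐ[ℂ] A) (β : G → B ≃⋆ₐ[ℂ] B) (γ : G → C ≃⋆ₐ[ℂ] C)
    (hα1 : αA 1 = StarAlgEquiv.refl ℂ A) (hαmul : ∀ g h a, αA (g * h) a = αA g (αA h a))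
    (hβ1 : β 1 = StarAlgEquiv.refl ℂ B) (hβmul : ∀ g h b, β (g * h) b = β g (β h b))
    (hγ1 : γ 1 = StarAlgEquiv.refl ℂ C) (hγmul : ∀ g h c, γ (g * h) c = γ g (γ h c))
    -- `κ(b) = b ⊗ e₁₁`: an equivariant embedding of `B` onto the corner `κ(1) C κ(1)`
    (κ : B →⋆ₙₐ[ℂ] C) (hκinj : Function.Injective κ)
    (hκequiv : ∀ g b, κ (β g b) = γ g (κ b))
    (hcorner : ∀ c : C, κ 1 * c * κ 1 ∈ Set.range κ)
    -- the extension of `γ` to the unitization `1 + C`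
    (γU : G → Unitization ℂ C ≃⋆ₐ[ℂ] Unitization ℂ C)
    (hγU1 : γU 1 = StarAlgEquiv.refl ℂ (Unitization ℂ C))
    (hγUmul : ∀ g h x, γU (g * h) x = γU g (γU h x))
    (hγUγ : ∀ (g : G) (c : C), γU g (c : Unitization ℂ C) = ((γ g c : C) : Unitization ℂ C))
    -- the unital morphisms `φ₀, ψ₀ : A → B` and the compressed cocycles `u₀, v₀`
    (φ₀ ψ₀ : A →⋆ₙₐ[ℂ] B) (hφ₀1 : φ₀ 1 = 1) (hψ₀1 : ψ₀ 1 = 1)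
    (u₀ v₀ : G → B)
    (hu₀un : ∀ g, u₀ g ∈ unitary B) (hv₀un : ∀ g, v₀ g ∈ unitary B)
    (hu₀cont : Continuous u₀) (hv₀cont : Continuous v₀)
    (hu₀coc : ∀ g h, u₀ (g * h) = u₀ g * β g (u₀ h))
    (hv₀coc : ∀ g h, v₀ (g * h) = v₀ g * β g (v₀ h))
    (hφ₀equiv : ∀ g a, φ₀ (αA g a) = u₀ g * β g (φ₀ a) * star (u₀ g))
    (hψ₀equiv : ∀ g a, ψ₀ (αA g a) = v₀ g * β g (ψ₀ a) * star (v₀ g))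
    -- the induced proper cocycle morphisms `(κ∘φ₀, u)`, `(κ∘ψ₀, v)` into `(C, γ)`
    (u v : G → Unitization ℂ C)
    (hu : ∀ g, u g = 1 + ((κ (u₀ g) : C) : Unitization ℂ C) - ((κ 1 : C) : Unitization ℂ C))
    (hv : ∀ g, v g = 1 + ((κ (v₀ g) : C) : Unitization ℂ C) - ((κ 1 : C) : Unitization ℂ C))
    -- the witnessing path of the strong asymptotic unitary equivalence of
    -- `(κ∘φ₀, u)` and `(κ∘ψ₀, v)` in `U(1 + B ⊗ K)`
    (w : ℝ → Unitization ℂ C)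
    (hwcont : Continuous w) (hw0 : w 0 = 1)
    (hwun : ∀ t, w t ∈ unitary (Unitization ℂ C) ∧ (w t).fst = 1)
    (hwconv : ∀ a : A, Filter.Tendsto
      (fun t => w t * ((κ (φ₀ a) : C) : Unitization ℂ C) * star (w t))
      Filter.atTop (nhds ((κ (ψ₀ a) : C) : Unitization ℂ C)))
    (hwcoc : ∀ K : Set G, IsCompact K → Filter.Tendsto
      (fun t => ⨆ g ∈ K, ‖v g - w t * u g * star (γU g (w t))‖) Filter.atTop (nhds 0))
    -- the path asymptotically commutes with `1_B ⊗ e₁₁ = κ(1)`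
    (hwcomm : Filter.Tendsto
      (fun t => ‖w t * ((κ 1 : C) : Unitization ℂ C) - ((κ 1 : C) : Unitization ℂ C) * w t‖)
      Filter.atTop (nhds 0))
    -- the unitary group of `B` is connected
    (hUB : IsConnected {x : B | x ∈ unitary B}) :
    -- conclusion: `(φ₀, u₀)` and `(ψ₀, v₀)` are strongly asymptotically unitarily
    -- equivalent as proper cocycle morphisms into `(B, β)`
    ∃ w₀ : ℝ → B, Continuous w₀ ∧ w₀ 0 = 1 ∧ (∀ t, w₀ t ∈ unitary B) ∧
      (∀ a : A, Filter.Tendsto (fun t => w₀ t * φ₀ a * star (w₀ t))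
        Filter.atTop (nhds (ψ₀ a))) ∧
      ∀ K : Set G, IsCompact K → Filter.Tendsto
        (fun t => ⨆ g ∈ K, ‖v₀ g - w₀ t * u₀ g * β g (star (w₀ t))‖)
        Filter.atTop (nhds 0) := by
  classical
  rcases subsingleton_or_nontrivial B with hB | hB
  · refine ⟨fun _ => 1, continuous_const, Subsingleton.elim _ _, fun t => ?_, fun a => ?_, fun K hK => ?_⟩
    · have : (1 : B) = 1 := rfl
      exact Unitary.mem_iff.mpr ⟨Subsingleton.elim _ _, Subsingleton.elim _ _⟩
    · have he : (fun t : ℝ => (1:B) * φ₀ a * star (1:B)) = fun _ => ψ₀ a := by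
        funext t; exact Subsingleton.elim _ _
      rw [he]; exact tendsto_const_nhds
    · have he : (fun t : ℝ => ⨆ g ∈ K, ‖v₀ g - (1:B) * u₀ g * β g (star (1:B))‖)
          = fun _ => (0:ℝ) := by
        funext t
        have : ∀ g : G, ‖v₀ g - (1:B) * u₀ g * β g (star (1:B))‖ = 0 := fun g => by
          rw [Subsingleton.elim (v₀ g - (1:B) * u₀ g * β g (star (1:B))) 0, norm_zero]
        simp only [this]
        exact real_biSup_zero K
      rw [he]; exact tendsto_const_nhds
  -- Nontrivial case
  have hιnorm : ∀ x : B, ‖emb κ x‖ = ‖x‖ := fun x => by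
    rw [emb, Unitization.norm_inr]; exact NonUnitalStarAlgHom.norm_map κ hκinj x
  have hιmul : ∀ x y : B, emb κ x * emb κ y = emb κ (x * y) := fun x y => by
    rw [emb, emb, emb, map_mul]; exact (Unitization.inr_mul ℂ _ _).symm
  have hιadd : ∀ x y : B, emb κ x + emb κ y = emb κ (x + y) := fun x y => by
    rw [emb, emb, emb, map_add]; exact (Unitization.inr_add ℂ _ _).symm
  have hιsub : ∀ x y : B, emb κ x - emb κ y = emb κ (x - y) := fun x y => by
    rw [emb, emb, emb, map_sub]; exact (Unitization.inr_sub ℂ _ _).symm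
  have hιstar : ∀ x : B, star (emb κ x) = emb κ (star x) := fun x => by
    rw [emb, emb, map_star]; exact (Unitization.inr_star _).symm
  have hPP : emb κ 1 * emb κ 1 = emb κ 1 := by rw [hιmul, mul_one]
  have hPstar : star (emb κ 1) = emb κ 1 := by rw [hιstar, star_one]
  have hPnorm : ‖emb κ 1‖ ≤ 1 := le_of_eq (by rw [hιnorm, norm_one])
  have hPP' : ∀ X : Unitization ℂ C, emb κ 1 * (emb κ 1 * X) = emb κ 1 * X := fun X => by
    rw [← mul_assoc, hPP]
  have hWnorm : ∀ t, ‖w t‖ = 1 := fun t => CStarRing.norm_of_mem_unitary (hwun t).1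
  -- corner unitaries
  have hcornerU : ∀ x : B, x ∈ unitary B →
      (1 + emb κ x - emb κ 1) ∈ unitary (Unitization ℂ C) := by
    intro x hx
    have hx1 : star x * x = 1 := (Unitary.mem_iff.mp hx).1
    have hx2 : x * star x = 1 := (Unitary.mem_iff.mp hx).2
    have hstareq : star (1 + emb κ x - emb κ 1) = 1 + emb κ (star x) - emb κ 1 := by
      rw [star_sub, star_add, star_one, hιstar, hPstar]
    have expand : ∀ y z : B, (1 + emb κ y - emb κ 1) * (1 + emb κ z - emb κ 1)
        = 1 + emb κ z - emb κ 1 + emb κ y + emb κ y * emb κ z - emb κ y * emb κ 1 - emb κ 1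
          - emb κ 1 * emb κ z + emb κ 1 * emb κ 1 := by
      intro y z; noncomm_ring
    rw [Unitary.mem_iff]
    constructor
    · rw [hstareq, expand, hιmul, hιmul, hιmul, hιmul, hx1, mul_one, one_mul, one_mul]
      abel
    · rw [hstareq, expand, hιmul, hιmul, hιmul, hιmul, hx2, mul_one, one_mul, one_mul]
      abel
  have hu' : ∀ g, u g = 1 + emb κ (u₀ g) - emb κ 1 := fun g => hu g
  have hv' : ∀ g, v g = 1 + emb κ (v₀ g) - emb κ 1 := fun g => hv g
  have hUgnorm : ∀ g, ‖u g‖ = 1 := fun g => by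
    rw [hu' g]; exact CStarRing.norm_of_mem_unitary (hcornerU _ (hu₀un g))
  have hVgnorm : ∀ g, ‖v g‖ = 1 := fun g => by
    rw [hv' g]; exact CStarRing.norm_of_mem_unitary (hcornerU _ (hv₀un g))
  -- the compressed path in `B`
  have hbex : ∀ t : ℝ, ∃ x : B, emb κ x = emb κ 1 * w t * emb κ 1 := by
    intro t
    set c := (w t).snd with hcdef
    obtain ⟨y, hy⟩ := hcorner c
    refine ⟨1 + y, ?_⟩
    have hw : w t = 1 + (c : Unitization ℂ C) := by
      conv_lhs => rw [← Unitization.inl_fst_add_inr_snd_eq (w t)]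
      rw [(hwun t).2, Unitization.inl_one]
    rw [hw]
    have e1 : emb κ 1 * (1 + (c : Unitization ℂ C)) * emb κ 1
        = emb κ 1 * emb κ 1 + emb κ 1 * (c : Unitization ℂ C) * emb κ 1 := by noncomm_ring
    have e2 : emb κ 1 * (c : Unitization ℂ C) * emb κ 1 = ((κ 1 * c * κ 1 : C) : Unitization ℂ C) := by
      rw [emb, ← Unitization.inr_mul ℂ, ← Unitization.inr_mul ℂ]
    rw [e1, e2, hPP, ← hy]
    rw [emb, emb, map_add]
    exact Unitization.inr_add ℂ _ _
  choose b hb using hbex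
  have hbnorm : ∀ t, ‖b t‖ ≤ 1 := by
    intro t
    rw [← hιnorm, hb]
    calc ‖emb κ 1 * w t * emb κ 1‖ ≤ ‖emb κ 1 * w t‖ * ‖emb κ 1‖ := norm_mul_le _ _
      _ ≤ ‖emb κ 1‖ * ‖w t‖ * ‖emb κ 1‖ :=
          mul_le_mul_of_nonneg_right (norm_mul_le _ _) (norm_nonneg _)
      _ ≤ 1 * 1 * 1 := by
          apply mul_le_mul (mul_le_mul hPnorm (le_of_eq (hWnorm t)) (norm_nonneg _) zero_le_one)
            hPnorm (norm_nonneg _)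
          norm_num
      _ = 1 := by norm_num
    -- commutator estimates
  have hε1 : ∀ t, ‖star (b t) * b t - 1‖ ≤ ‖w t * emb κ 1 - emb κ 1 * w t‖ := by
    intro t
    have hw1 : star (w t) * w t = 1 := (Unitary.mem_iff.mp (hwun t).1).1
    have e0 : emb κ (star (b t) * b t - 1)
        = star (emb κ 1 * w t * emb κ 1) * (emb κ 1 * w t * emb κ 1) - emb κ 1 := by
      rw [← hιsub, ← hιmul, ← hιstar, hb]
    have hstar3 : star (emb κ 1 * w t * emb κ 1) = emb κ 1 * star (w t) * emb κ 1 := by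
      simp only [star_mul, hPstar, mul_assoc]
    have e1 : star (emb κ 1 * w t * emb κ 1) * (emb κ 1 * w t * emb κ 1) - emb κ 1
        = (emb κ 1 * star (w t)) * ((emb κ 1 * w t - w t * emb κ 1) * emb κ 1) := by
      rw [hstar3]
      simp only [sub_mul, mul_sub, mul_assoc, hPP']
      rw [hPP, ← mul_assoc (star (w t)) (w t) (emb κ 1), hw1, one_mul, hPP]
    calc ‖star (b t) * b t - 1‖ = ‖emb κ (star (b t) * b t - 1)‖ := (hιnorm _).symm
      _ = ‖(emb κ 1 * star (w t)) * ((emb κ 1 * w t - w t * emb κ 1) * emb κ 1)‖ := by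
          rw [e0, e1]
      _ ≤ ‖(emb κ 1 * w t - w t * emb κ 1) * emb κ 1‖ := by
          apply norm_mul_le_one_left
          apply norm_mul_le_one hPnorm
          rw [norm_star]; exact le_of_eq (hWnorm t)
      _ ≤ ‖emb κ 1 * w t - w t * emb κ 1‖ := norm_mul_le_one_right _ hPnorm
      _ = ‖w t * emb κ 1 - emb κ 1 * w t‖ := norm_sub_rev _ _
  have hε2 : ∀ t, ‖b t * star (b t) - 1‖ ≤ ‖w t * emb κ 1 - emb κ 1 * w t‖ := by
    intro t
    have hw2 : w t * star (w t) = 1 := (Unitary.mem_iff.mp (hwun t).1).2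
    have e0 : emb κ (b t * star (b t) - 1)
        = (emb κ 1 * w t * emb κ 1) * star (emb κ 1 * w t * emb κ 1) - emb κ 1 := by
      rw [← hιsub, ← hιmul, ← hιstar, hb]
    have hstar3 : star (emb κ 1 * w t * emb κ 1) = emb κ 1 * star (w t) * emb κ 1 := by
      simp only [star_mul, hPstar, mul_assoc]
    have e1 : (emb κ 1 * w t * emb κ 1) * star (emb κ 1 * w t * emb κ 1) - emb κ 1
        = (emb κ 1 * w t) * ((emb κ 1 * star (w t) - star (w t) * emb κ 1) * emb κ 1) := by
      rw [hstar3]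
      simp only [sub_mul, mul_sub, mul_assoc, hPP']
      rw [hPP, ← mul_assoc (w t) (star (w t)) (emb κ 1), hw2, one_mul, hPP]
    have hcommstar : ‖emb κ 1 * star (w t) - star (w t) * emb κ 1‖
        = ‖w t * emb κ 1 - emb κ 1 * w t‖ := by
      rw [← norm_star (w t * emb κ 1 - emb κ 1 * w t)]
      congr 1
      simp only [star_sub, star_mul, hPstar]
    calc ‖b t * star (b t) - 1‖ = ‖emb κ (b t * star (b t) - 1)‖ := (hιnorm _).symm
      _ = ‖(emb κ 1 * w t) * ((emb κ 1 * star (w t) - star (w t) * emb κ 1) * emb κ 1)‖ := by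
          rw [e0, e1]
      _ ≤ ‖(emb κ 1 * star (w t) - star (w t) * emb κ 1) * emb κ 1‖ := by
          apply norm_mul_le_one_left
          exact norm_mul_le_one hPnorm (le_of_eq (hWnorm t))
      _ ≤ ‖emb κ 1 * star (w t) - star (w t) * emb κ 1‖ := norm_mul_le_one_right _ hPnorm
      _ = ‖w t * emb κ 1 - emb κ 1 * w t‖ := hcommstar
  -- choose the threshold time
  obtain ⟨T, hT⟩ : ∃ T : ℝ, ∀ τ, T ≤ τ → ‖w τ * emb κ 1 - emb κ 1 * w τ‖ ≤ 2⁻¹ := by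
    have hev := hwcomm.eventually (eventually_le_nhds (show (0:ℝ) < 2⁻¹ by norm_num))
    obtain ⟨T, hT⟩ := Filter.eventually_atTop.mp hev
    exact ⟨T, fun τ hτ => hT τ hτ⟩
  have hτT : ∀ t : ℝ, T ≤ T + max t 1 := fun t => by
    nlinarith [le_max_right t 1]
  have hTb1 : ∀ t : ℝ, ‖star (b (T + max t 1)) * b (T + max t 1) - 1‖ ≤ 2⁻¹ := fun t =>
    (hε1 _).trans (hT _ (hτT t))
  have hTb2 : ∀ t : ℝ, ‖b (T + max t 1) * star (b (T + max t 1)) - 1‖ ≤ 2⁻¹ := fun t =>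
    (hε2 _).trans (hT _ (hτT t))
  -- continuity of b
  have hiso : Isometry (fun x : B => emb κ x) := by
    apply Isometry.of_dist_eq
    intro x y
    rw [dist_eq_norm, dist_eq_norm, hιsub, hιnorm]
  have hbcont : Continuous b := by
    rw [hiso.isEmbedding.continuous_iff]
    have : (fun t => emb κ (b t)) = fun t => emb κ 1 * w t * emb κ 1 := funext hb
    show Continuous fun t => emb κ (b t)
    rw [this]
    exact (continuous_const.mul hwcont).mul continuous_const
  have hclamp : Continuous fun t : ℝ => T + max t 1 :=
    continuous_const.add (continuous_id.max continuous_const)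
  have huucont : Continuous fun t : ℝ => upart (b (T + max t 1)) :=
    upart_continuous _ (hbcont.comp hclamp) hTb1
  have huuun : ∀ t : ℝ, upart (b (T + max t 1)) ∈ unitary B := fun t =>
    upart_mem_unitary (hTb1 t) (hTb2 t)
  -- distance from the compressed unitary to the compression
  have hUdiff : ∀ t : ℝ, ‖emb κ (upart (b (T + max t 1))) - emb κ 1 * w (T + max t 1) * emb κ 1‖
      ≤ ‖w (T + max t 1) * emb κ 1 - emb κ 1 * w (T + max t 1)‖ := by
    intro t
    rw [← hb, hιsub, hιnorm]
    refine (norm_upart_sub (hTb1 t)).trans ?_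
    calc ‖b (T + max t 1)‖ * ‖star (b (T + max t 1)) * b (T + max t 1) - 1‖
        ≤ 1 * ‖star (b (T + max t 1)) * b (T + max t 1) - 1‖ :=
          mul_le_mul_of_nonneg_right (hbnorm _) (norm_nonneg _)
      _ = ‖star (b (T + max t 1)) * b (T + max t 1) - 1‖ := one_mul _
      _ ≤ _ := hε1 _
  have hu'norm : ∀ t : ℝ, ‖emb κ (upart (b (T + max t 1)))‖ ≤ 1 := fun t => by
    rw [hιnorm]
    exact norm_le_one_of_unitary (huuun t)
  have hYnorm : ∀ τ : ℝ, ‖emb κ 1 * w τ * emb κ 1‖ ≤ 1 := fun τ => by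
    rw [← hb, hιnorm]
    exact hbnorm τ
  have hshift : Filter.Tendsto (fun t : ℝ => T + max t 1) Filter.atTop Filter.atTop := by
    apply Filter.tendsto_atTop_mono (fun t : ℝ => show T + t ≤ T + max t 1 by
      nlinarith [le_max_left t 1])
    exact Filter.tendsto_atTop_add_const_left Filter.atTop T Filter.tendsto_id
  -- path from 1 to the time-one unitary
  obtain ⟨γp, hγp⟩ := joinedIn_one_of_connected hUB (huuun 1)
  refine ⟨fun t => if t ≤ 1 then γp.extend t else upart (b (T + max t 1)), ?_, ?_, ?_, ?_, ?_⟩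
  · apply Continuous.if_le γp.continuous_extend huucont continuous_id continuous_const
    intro x hx
    simp only [id] at hx
    subst hx
    rw [Path.extend_one]
  · show (if (0:ℝ) ≤ 1 then γp.extend 0 else upart (b (T + max 0 1))) = 1
    rw [if_pos (by norm_num : (0:ℝ) ≤ 1)]
    exact γp.extend_zero
  · intro t
    show (if t ≤ 1 then γp.extend t else upart (b (T + max t 1))) ∈ unitary B
    by_cases h : t ≤ 1
    · rw [if_pos h]
      have : γp.extend t = γp (Set.projIcc 0 1 zero_le_one t) := rfl
      rw [this]
      exact hγp _
    · rw [if_neg h]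
      exact huuun t
  · -- conjugation limit
    intro a
    rw [tendsto_iff_norm_sub_tendsto_zero]
    have hF1 : ∀ X : Unitization ℂ C, emb κ 1 * (emb κ (φ₀ a) * X) = emb κ (φ₀ a) * X :=
      fun X => by rw [← mul_assoc, hιmul, one_mul]
    have hF2 : ∀ X : Unitization ℂ C, emb κ (φ₀ a) * (emb κ 1 * X) = emb κ (φ₀ a) * X :=
      fun X => by rw [← mul_assoc, hιmul, mul_one]
    have idA : ∀ τ : ℝ, (emb κ 1 * w τ * emb κ 1) * emb κ (φ₀ a)
        * star (emb κ 1 * w τ * emb κ 1)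
        = emb κ 1 * (w τ * emb κ (φ₀ a) * star (w τ)) * emb κ 1 := by
      intro τ
      simp only [star_mul, hPstar, mul_assoc, hF1, hF2]
    have hGP : emb κ 1 * emb κ (ψ₀ a) * emb κ 1 = emb κ (ψ₀ a) := by
      rw [hιmul, hιmul, one_mul, mul_one]
    apply squeeze_zero' (Filter.Eventually.of_forall fun t => norm_nonneg _)
      (g := fun t => 2 * ‖w (T + max t 1) * emb κ 1 - emb κ 1 * w (T + max t 1)‖ * ‖φ₀ a‖
        + ‖w (T + max t 1) * emb κ (φ₀ a) * star (w (T + max t 1)) - emb κ (ψ₀ a)‖)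
    · refine Filter.eventually_atTop.mpr ⟨2, fun t ht => ?_⟩
      have hne : ¬ t ≤ 1 := by linarith
      show ‖(if t ≤ 1 then γp.extend t else upart (b (T + max t 1))) * φ₀ a
          * star (if t ≤ 1 then γp.extend t else upart (b (T + max t 1))) - ψ₀ a‖ ≤ _
      rw [if_neg hne]
      set τ := T + max t 1 with hτ
      set u' := upart (b τ) with hu'
      have e0 : ‖u' * φ₀ a * star u' - ψ₀ a‖
          = ‖emb κ u' * emb κ (φ₀ a) * star (emb κ u') - emb κ (ψ₀ a)‖ := by
        rw [← hιnorm, ← hιsub, ← hιmul, ← hιmul, ← hιstar]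
      rw [e0]
      have step1 : ‖emb κ u' * emb κ (φ₀ a) * star (emb κ u')
          - (emb κ 1 * w τ * emb κ 1) * emb κ (φ₀ a) * star (emb κ 1 * w τ * emb κ 1)‖
          ≤ 2 * ‖w τ * emb κ 1 - emb κ 1 * w τ‖ * ‖φ₀ a‖ := by
        have h := triple_diff (emb κ u') (emb κ 1 * w τ * emb κ 1) (emb κ (φ₀ a))
          (star (emb κ u')) (star (emb κ 1 * w τ * emb κ 1)) (hYnorm τ)
          (by rw [norm_star]; exact hu'norm t)
        refine h.trans ?_
        have hs : ‖star (emb κ u') - star (emb κ 1 * w τ * emb κ 1)‖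
            = ‖emb κ u' - emb κ 1 * w τ * emb κ 1‖ := by
          rw [← star_sub, norm_star]
        rw [hs, hιnorm]
        have := hUdiff t
        nlinarith [norm_nonneg (φ₀ a), norm_nonneg (emb κ u' - emb κ 1 * w τ * emb κ 1),
          hUdiff t]
      have step2 : ‖(emb κ 1 * w τ * emb κ 1) * emb κ (φ₀ a) * star (emb κ 1 * w τ * emb κ 1)
          - emb κ (ψ₀ a)‖
          ≤ ‖w τ * emb κ (φ₀ a) * star (w τ) - emb κ (ψ₀ a)‖ := by
        rw [idA τ]
        calc ‖emb κ 1 * (w τ * emb κ (φ₀ a) * star (w τ)) * emb κ 1 - emb κ (ψ₀ a)‖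
            = ‖emb κ 1 * (w τ * emb κ (φ₀ a) * star (w τ)) * emb κ 1
              - emb κ 1 * emb κ (ψ₀ a) * emb κ 1‖ := by rw [hGP]
          _ ≤ ‖w τ * emb κ (φ₀ a) * star (w τ) - emb κ (ψ₀ a)‖ :=
              sandwich_norm _ _ _ hPnorm
      calc ‖emb κ u' * emb κ (φ₀ a) * star (emb κ u') - emb κ (ψ₀ a)‖
          ≤ ‖emb κ u' * emb κ (φ₀ a) * star (emb κ u')
              - (emb κ 1 * w τ * emb κ 1) * emb κ (φ₀ a) * star (emb κ 1 * w τ * emb κ 1)‖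
            + ‖(emb κ 1 * w τ * emb κ 1) * emb κ (φ₀ a) * star (emb κ 1 * w τ * emb κ 1)
              - emb κ (ψ₀ a)‖ := norm_sub_le_norm_sub_add_norm_sub _ _ _
        _ ≤ 2 * ‖w τ * emb κ 1 - emb κ 1 * w τ‖ * ‖φ₀ a‖
            + ‖w τ * emb κ (φ₀ a) * star (w τ) - emb κ (ψ₀ a)‖ := add_le_add step1 step2
    · have h1 : Filter.Tendsto
          (fun t : ℝ => ‖w (T + max t 1) * emb κ 1 - emb κ 1 * w (T + max t 1)‖)
          Filter.atTop (nhds 0) := hwcomm.comp hshift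
      have h2 : Filter.Tendsto
          (fun t : ℝ => ‖w (T + max t 1) * emb κ (φ₀ a) * star (w (T + max t 1))
            - emb κ (ψ₀ a)‖) Filter.atTop (nhds 0) :=
        (tendsto_iff_norm_sub_tendsto_zero.mp (hwconv a)).comp hshift
      have := ((h1.const_mul (2:ℝ)).mul_const ‖φ₀ a‖).add h2
      simpa using this
  · -- cocycle limit
    intro K hK
    have hγUn : ∀ (g : G) (x : Unitization ℂ C), ‖γU g x‖ = ‖x‖ := fun g x =>
      NonUnitalStarAlgHom.norm_map (γU g) (EquivLike.injective (γU g)) x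
    have hγUP : ∀ g : G, γU g (emb κ 1) = emb κ 1 := fun g => by
      rw [emb, hγUγ g (κ 1), ← hκequiv, map_one]
    have hcorn1 : ∀ (x : B) (X : Unitization ℂ C),
        emb κ 1 * (emb κ x * X) = emb κ x * X := fun x X => by
      rw [← mul_assoc, hιmul, one_mul]
    have hcorn2 : ∀ (x : B) (X : Unitization ℂ C),
        emb κ x * (emb κ 1 * X) = emb κ x * X := fun x X => by
      rw [← mul_assoc, hιmul, mul_one]
    have huP : ∀ g, u g * emb κ 1 = emb κ (u₀ g) := fun g => by
      rw [hu' g, sub_mul, add_mul, one_mul, hιmul, mul_one, hPP]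
      abel
    have hvP : ∀ g, v g * emb κ 1 = emb κ (v₀ g) := fun g => by
      rw [hv' g, sub_mul, add_mul, one_mul, hιmul, mul_one, hPP]
      abel
    have hPv : ∀ g, emb κ 1 * v g = emb κ (v₀ g) := fun g => by
      rw [hv' g, mul_sub, mul_add, mul_one, hιmul, one_mul, hPP]
      abel
    have hqnorm : ∀ g, ‖emb κ (u₀ g)‖ ≤ 1 := fun g => by
      rw [hιnorm]
      exact norm_le_one_of_unitary (hu₀un g)
    have hβγ : ∀ (g : G) (x : B), emb κ (β g x) = γU g (emb κ x) := fun g x => by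
      rw [emb, hκequiv]
      exact (hγUγ g (κ x)).symm
    have hYgnorm : ∀ (g : G) (τ : ℝ), ‖v g - w τ * u g * star (γU g (w τ))‖ ≤ 2 := by
      intro g τ
      refine (norm_sub_le _ _).trans ?_
      have h2 : ‖w τ * u g * star (γU g (w τ))‖ ≤ 1 := by
        apply norm_mul_le_one (norm_mul_le_one (le_of_eq (hWnorm τ)) (le_of_eq (hUgnorm g)))
        rw [norm_star, hγUn]
        exact le_of_eq (hWnorm τ)
      rw [hVgnorm g]
      linarith
    -- pointwise estimate
    have hpt : ∀ (t : ℝ), ¬ t ≤ 1 → ∀ g : G,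
        ‖v₀ g - upart (b (T + max t 1)) * u₀ g * β g (star (upart (b (T + max t 1))))‖
        ≤ ‖v g - w (T + max t 1) * u g * star (γU g (w (T + max t 1)))‖
          + 3 * ‖w (T + max t 1) * emb κ 1 - emb κ 1 * w (T + max t 1)‖ := by
      intro t ht g
      set τ := T + max t 1 with hτdef
      set u' := upart (b τ) with hu'def
      set γw := star (γU g (w τ)) with hγwdef
      have hstar3 : star (emb κ 1 * w τ * emb κ 1) = emb κ 1 * star (w τ) * emb κ 1 := by
        simp only [star_mul, hPstar, mul_assoc]
      have hγY : γU g (star (emb κ 1 * w τ * emb κ 1)) = emb κ 1 * γw * emb κ 1 := by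
        rw [hstar3, map_mul, map_mul, hγUP, hγwdef, ← map_star]
      -- the element
      have e0 : ‖v₀ g - u' * u₀ g * β g (star u')‖
          = ‖emb κ (v₀ g) - emb κ u' * emb κ (u₀ g) * γU g (star (emb κ u'))‖ := by
        rw [← hιnorm, ← hιsub, ← hιmul, ← hιmul, hβγ, ← hιstar]
      rw [e0]
      have hη : ‖emb κ u' - emb κ 1 * w τ * emb κ 1‖
          ≤ ‖w τ * emb κ 1 - emb κ 1 * w τ‖ := hUdiff t
      -- step A
      have stepA : ‖emb κ u' * emb κ (u₀ g) * γU g (star (emb κ u'))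
          - (emb κ 1 * w τ * emb κ 1) * emb κ (u₀ g)
            * γU g (star (emb κ 1 * w τ * emb κ 1))‖
          ≤ 2 * ‖w τ * emb κ 1 - emb κ 1 * w τ‖ := by
        have h := triple_diff (emb κ u') (emb κ 1 * w τ * emb κ 1) (emb κ (u₀ g))
          (γU g (star (emb κ u'))) (γU g (star (emb κ 1 * w τ * emb κ 1))) (hYnorm τ)
          (by rw [hγUn, norm_star]; exact hu'norm t)
        refine h.trans ?_
        have hs : ‖γU g (star (emb κ u')) - γU g (star (emb κ 1 * w τ * emb κ 1))‖
            = ‖emb κ u' - emb κ 1 * w τ * emb κ 1‖ := by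
          rw [← map_sub, hγUn, ← star_sub, norm_star]
        rw [hs]
        nlinarith [hη, norm_nonneg (emb κ u' - emb κ 1 * w τ * emb κ 1),
          norm_nonneg (emb κ (u₀ g)), hqnorm g,
          norm_nonneg (w τ * emb κ 1 - emb κ 1 * w τ)]
      -- step B : exact identity
      have stepB : (emb κ 1 * w τ * emb κ 1) * emb κ (u₀ g)
            * γU g (star (emb κ 1 * w τ * emb κ 1))
          = emb κ 1 * (w τ * (emb κ (u₀ g) * (γw * emb κ 1))) := by
        rw [hγY]
        simp only [mul_assoc, hcorn1, hcorn2]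
      -- step C : commutator swap
      have hcommγ : ‖emb κ 1 * γw - γw * emb κ 1‖
          = ‖w τ * emb κ 1 - emb κ 1 * w τ‖ := by
        have e1 : emb κ 1 * γw - γw * emb κ 1
            = γU g (emb κ 1 * star (w τ) - star (w τ) * emb κ 1) := by
          rw [map_sub, map_mul, map_mul, hγUP, hγwdef, ← map_star]
        rw [e1, hγUn]
        rw [← norm_star (w τ * emb κ 1 - emb κ 1 * w τ)]
        congr 1
        simp only [star_sub, star_mul, hPstar]
      have stepC : ‖emb κ 1 * (w τ * (emb κ (u₀ g) * (γw * emb κ 1)))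
          - emb κ 1 * (w τ * (u g * (γw * emb κ 1)))‖
          ≤ ‖w τ * emb κ 1 - emb κ 1 * w τ‖ := by
        have e : emb κ 1 * (w τ * (emb κ (u₀ g) * (γw * emb κ 1)))
            - emb κ 1 * (w τ * (u g * (γw * emb κ 1)))
            = (emb κ 1 * (w τ * u g)) * ((emb κ 1 * γw - γw * emb κ 1) * emb κ 1) := by
          rw [← huP g]
          simp only [mul_sub, sub_mul, mul_assoc, hPP]
        rw [e]
        rw [← hcommγ]
        refine (norm_mul_le_one_left _ ?_).trans (norm_mul_le_one_right _ hPnorm)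
        exact norm_mul_le_one hPnorm (norm_mul_le_one (le_of_eq (hWnorm τ))
          (le_of_eq (hUgnorm g)))
      -- step E : remaining term is the compression of the cocycle defect
      have stepE : ‖emb κ (v₀ g) - emb κ 1 * (w τ * (u g * (γw * emb κ 1)))‖
          ≤ ‖v g - w τ * u g * γw‖ := by
        have h1 : emb κ 1 * (v g * emb κ 1) = emb κ (v₀ g) := by
          rw [← mul_assoc, hPv g, hιmul, mul_one]
        have e : emb κ (v₀ g) - emb κ 1 * (w τ * (u g * (γw * emb κ 1)))
            = emb κ 1 * ((v g - w τ * u g * γw) * emb κ 1) := by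
          rw [sub_mul, mul_sub, h1]
          simp only [mul_assoc]
        rw [e]
        exact (norm_mul_le_one_left _ hPnorm).trans (norm_mul_le_one_right _ hPnorm)
      -- assemble
      calc ‖emb κ (v₀ g) - emb κ u' * emb κ (u₀ g) * γU g (star (emb κ u'))‖
          ≤ ‖emb κ (v₀ g) - emb κ 1 * (w τ * (u g * (γw * emb κ 1)))‖
            + ‖emb κ 1 * (w τ * (u g * (γw * emb κ 1)))
                - emb κ u' * emb κ (u₀ g) * γU g (star (emb κ u'))‖ :=
            norm_sub_le_norm_sub_add_norm_sub _ _ _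
        _ ≤ ‖v g - w τ * u g * γw‖
            + (‖emb κ 1 * (w τ * (u g * (γw * emb κ 1)))
                - emb κ 1 * (w τ * (emb κ (u₀ g) * (γw * emb κ 1)))‖
              + ‖emb κ 1 * (w τ * (emb κ (u₀ g) * (γw * emb κ 1)))
                - emb κ u' * emb κ (u₀ g) * γU g (star (emb κ u'))‖) := by
            refine add_le_add stepE (norm_sub_le_norm_sub_add_norm_sub _ _ _)
        _ ≤ ‖v g - w τ * u g * γw‖
            + (‖w τ * emb κ 1 - emb κ 1 * w τ‖
              + 2 * ‖w τ * emb κ 1 - emb κ 1 * w τ‖) := by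
            refine add_le_add_right (add_le_add ?_ ?_) _
            · rw [norm_sub_rev]
              exact stepC
            · rw [← stepB, norm_sub_rev]
              exact stepA
        _ = ‖v g - w τ * u g * star (γU g (w τ))‖
            + 3 * ‖w τ * emb κ 1 - emb κ 1 * w τ‖ := by
            rw [← hγwdef]
            ring
    -- squeeze
    apply squeeze_zero' (Filter.Eventually.of_forall fun t =>
        Real.iSup_nonneg fun g => Real.iSup_nonneg fun _ => norm_nonneg _)
      (g := fun t => (⨆ g ∈ K, ‖v g - w (T + max t 1) * u g * star (γU g (w (T + max t 1)))‖)
        + 3 * ‖w (T + max t 1) * emb κ 1 - emb κ 1 * w (T + max t 1)‖)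
    · refine Filter.eventually_atTop.mpr ⟨2, fun t ht => ?_⟩
      have hne : ¬ t ≤ 1 := by linarith
      have hRnn : 0 ≤ (⨆ g ∈ K, ‖v g - w (T + max t 1) * u g
            * star (γU g (w (T + max t 1)))‖)
          + 3 * ‖w (T + max t 1) * emb κ 1 - emb κ 1 * w (T + max t 1)‖ :=
        add_nonneg (Real.iSup_nonneg fun g => Real.iSup_nonneg fun _ => norm_nonneg _)
          (by positivity)
      show (⨆ g ∈ K, ‖v₀ g - (if t ≤ 1 then γp.extend t else upart (b (T + max t 1))) * u₀ g
          * β g (star (if t ≤ 1 then γp.extend t else upart (b (T + max t 1))))‖) ≤ _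
      simp only [if_neg hne]
      refine Real.iSup_le (fun g => Real.iSup_le (fun hg => ?_) hRnn) hRnn
      refine (hpt t hne g).trans (add_le_add_left ?_ _)
      have hbdd : BddAbove (Set.range fun g : G =>
          ⨆ _ : g ∈ K, ‖v g - w (T + max t 1) * u g * star (γU g (w (T + max t 1)))‖) := by
        refine ⟨2, ?_⟩
        rintro x ⟨g, rfl⟩
        exact Real.iSup_le (fun _ => hYgnorm g _) (by norm_num)
      have h1 : ‖v g - w (T + max t 1) * u g * star (γU g (w (T + max t 1)))‖
          = ⨆ _ : g ∈ K, ‖v g - w (T + max t 1) * u g * star (γU g (w (T + max t 1)))‖ := by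
        haveI : Nonempty (g ∈ K) := ⟨hg⟩
        exact ciSup_const.symm
      rw [h1]
      exact le_ciSup hbdd g
    · have h1 := (hwcoc K hK).comp hshift
      have h2 := (hwcomm.comp hshift).const_mul (3:ℝ)
      have := h1.add h2
      simpa [emb] using this
end
end
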